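/- arXiv:1607.02959 — 2 statements merged into one kernel-verified Lean document; each statement's English description precedes it below -/
import Mathlib

section
/- If λ_max(E_{x∼p}[z(x)_S z(x)_Sᵀ]) ≤ D_max, then λ_max((1/m)·Σ_{l=1}^m z^(l)_S (z^(l)_S)ᵀ) < 2·D_max with probability at least 1 − |S|·exp(−m(1−ν)/(4|S|)) over the i.i.d. draw of the m samples from p. -/
/- Common setup: linear influence games (LIGs), the PSNE set, the noisy
observation model, feature vectors, the logistic loss and its gradient,
population/sample Hessian and scatter matrices, and Rayleigh-quotient
encodings of eigenvalue bounds for (symmetric) submatrices.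

Joint actions in `{-1,+1}^n` are modeled as `Fin n → Bool` via the sign map
`sgn` (`true ↦ +1`, `false ↦ -1`).  For player `i`, the feature vector
`z_i(x) = (x_i · x_{-i}, x_i)` and the parameter vector `v_i = (w_{i,-i}, -b_i)`
are indexed by `Fin n`, with the bias coordinate placed at index `i`
(a fixed permutation of the paper's coordinate ordering), so that
`v_i ⬝ᵥ z_i(x) = x_i (∑_{j ≠ i} W i j · x_j - b i)` is player `i`'s payoff. -/

open Matrix Finset

noncomputable section

/-- Sign of a Boolean action: `true ↦ +1`, `false ↦ -1`. -/
def sgn (a : Bool) : ℝ := if a then 1 else -1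

/-- Payoff of player `i` at joint action `x` in the LIG `(W, b)`:
`x_i (∑_{j ≠ i} W i j · x_j - b i)`. -/
def payoff {n : ℕ} (W : Matrix (Fin n) (Fin n) ℝ) (b : Fin n → ℝ)
    (i : Fin n) (x : Fin n → Bool) : ℝ :=
  sgn (x i) * ((∑ j ∈ Finset.univ.erase i, W i j * sgn (x j)) - b i)

/-- The pure-strategy Nash equilibria set `NE(W, b)`. -/
def NEset {n : ℕ} (W : Matrix (Fin n) (Fin n) ℝ) (b : Fin n → ℝ) :
    Finset (Fin n → Bool) :=
  @Finset.filter _ (fun x => ∀ i, 0 ≤ payoff W b i x) (Classical.decPred _)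
    Finset.univ

/-- The observation distribution
`p(x) = q·1[x ∈ NE]/|NE| + (1-q)·1[x ∉ NE]/(2^n - |NE|)`. -/
def pObs {n : ℕ} (q : ℝ) (NE : Finset (Fin n → Bool)) (x : Fin n → Bool) : ℝ :=
  if x ∈ NE then q / (NE.card : ℝ)
  else (1 - q) / ((2 : ℝ) ^ n - (NE.card : ℝ))

/-- The mixture coefficient `ν = (q - c/2^n)/(1 - c/2^n)`, where `c = |NE*|`. -/
def mixCoef (n : ℕ) (q : ℝ) (c : ℕ) : ℝ :=
  (q - (c : ℝ) / (2 : ℝ) ^ n) / (1 - (c : ℝ) / (2 : ℝ) ^ n)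

/-- Feature vector `z_i(x) = (x_i·x_{-i}, x_i)` (bias coordinate at index `i`). -/
def zvec {n : ℕ} (i : Fin n) (x : Fin n → Bool) : Fin n → ℝ :=
  fun j => if j = i then sgn (x i) else sgn (x i) * sgn (x j)

/-- Parameter vector `v_i = (w_{i,-i}, -b_i)` (bias coordinate at index `i`). -/
def vvec {n : ℕ} (W : Matrix (Fin n) (Fin n) ℝ) (b : Fin n → ℝ) (i : Fin n) :
    Fin n → ℝ :=
  fun j => if j = i then -b i else W i j

/-- Support `S = {j : v_j ≠ 0}` of a vector. -/
def supp {n : ℕ} (v : Fin n → ℝ) : Finset (Fin n) :=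
  @Finset.filter _ (fun j => v j ≠ 0) (Classical.decPred _) Finset.univ

/-- `η(s) = 1/(e^{s/2} + e^{-s/2})²`. -/
def eta (s : ℝ) : ℝ := 1 / (Real.exp (s / 2) + Real.exp (-s / 2)) ^ 2

/-- Logistic loss `ℓ_i(v, D) = (1/m) ∑_l log(1 + exp(-vᵀ z_i(x⁽ˡ⁾)))`. -/
def loss {n m : ℕ} (i : Fin n) (v : Fin n → ℝ)
    (D : Fin m → (Fin n → Bool)) : ℝ :=
  (1 / (m : ℝ)) * ∑ l, Real.log (1 + Real.exp (-(v ⬝ᵥ zvec i (D l))))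

/-- Gradient of the logistic loss,
`∇ℓ(v, D) = (1/m) ∑_l (-z⁽ˡ⁾)/(1 + exp(vᵀ z⁽ˡ⁾))`. -/
def gradLoss {n m : ℕ} (i : Fin n) (v : Fin n → ℝ)
    (D : Fin m → (Fin n → Bool)) : Fin n → ℝ :=
  fun j => (1 / (m : ℝ)) *
    ∑ l, -(zvec i (D l) j) / (1 + Real.exp (v ⬝ᵥ zvec i (D l)))

/-- ℓ1 norm `‖v‖₁ = ∑_j |v_j|`. -/
def norm1 {n : ℕ} (v : Fin n → ℝ) : ℝ := ∑ j, |v j|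

/-- Quadratic form `yᵀ M y`. -/
def quadForm {n : ℕ} (M : Matrix (Fin n) (Fin n) ℝ) (y : Fin n → ℝ) : ℝ :=
  y ⬝ᵥ M.mulVec y

/-- `λ_min(M_SS) ≥ c`, encoded via the Rayleigh quotient over vectors
supported on `S` (exactly equivalent for symmetric `M`). -/
def minEigSubGE {n : ℕ} (M : Matrix (Fin n) (Fin n) ℝ) (S : Finset (Fin n))
    (c : ℝ) : Prop :=
  ∀ y : Fin n → ℝ, (∀ j ∉ S, y j = 0) → c * (∑ j, y j ^ 2) ≤ quadForm M y

/-- `λ_min(M_SS) > c` (Rayleigh form; equivalent for symmetric `M` since the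
unit sphere of the finite-dimensional subspace is compact). -/
def minEigSubGT {n : ℕ} (M : Matrix (Fin n) (Fin n) ℝ) (S : Finset (Fin n))
    (c : ℝ) : Prop :=
  ∀ y : Fin n → ℝ, (∀ j ∉ S, y j = 0) → y ≠ 0 →
    c * (∑ j, y j ^ 2) < quadForm M y

/-- `λ_max(M_SS) ≤ c` (Rayleigh form). -/
def maxEigSubLE {n : ℕ} (M : Matrix (Fin n) (Fin n) ℝ) (S : Finset (Fin n))
    (c : ℝ) : Prop :=
  ∀ y : Fin n → ℝ, (∀ j ∉ S, y j = 0) → quadForm M y ≤ c * (∑ j, y j ^ 2)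

/-- `λ_max(M_SS) < c` (Rayleigh form). -/
def maxEigSubLT {n : ℕ} (M : Matrix (Fin n) (Fin n) ℝ) (S : Finset (Fin n))
    (c : ℝ) : Prop :=
  ∀ y : Fin n → ℝ, (∀ j ∉ S, y j = 0) → y ≠ 0 →
    quadForm M y < c * (∑ j, y j ^ 2)

/-- `λ_max(M_SS) ≥ c` (Rayleigh form: some nonzero supported vector attains it). -/
def maxEigSubGE {n : ℕ} (M : Matrix (Fin n) (Fin n) ℝ) (S : Finset (Fin n))
    (c : ℝ) : Prop :=
  ∃ y : Fin n → ℝ, (∀ j ∉ S, y j = 0) ∧ y ≠ 0 ∧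
    c * (∑ j, y j ^ 2) ≤ quadForm M y

/-- Population Hessian `H*_i = E_{x∼p}[η(vᵀz_i(x)) z_i(x) z_i(x)ᵀ]`. -/
def popHess {n : ℕ} (q : ℝ) (NE : Finset (Fin n → Bool)) (i : Fin n)
    (v : Fin n → ℝ) : Matrix (Fin n) (Fin n) ℝ :=
  ∑ x : Fin n → Bool,
    (pObs q NE x * eta (v ⬝ᵥ zvec i x)) • vecMulVec (zvec i x) (zvec i x)

/-- Population scatter matrix `E_{x∼p}[z_i(x) z_i(x)ᵀ]`. -/
def popScatter {n : ℕ} (q : ℝ) (NE : Finset (Fin n → Bool)) (i : Fin n) :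
    Matrix (Fin n) (Fin n) ℝ :=
  ∑ x : Fin n → Bool, pObs q NE x • vecMulVec (zvec i x) (zvec i x)

/-- Sample Hessian `H^m = (1/m) ∑_l η(vᵀz⁽ˡ⁾) z⁽ˡ⁾ (z⁽ˡ⁾)ᵀ`. -/
def sampleHess {n m : ℕ} (i : Fin n) (v : Fin n → ℝ)
    (D : Fin m → (Fin n → Bool)) : Matrix (Fin n) (Fin n) ℝ :=
  (1 / (m : ℝ)) •
    ∑ l, eta (v ⬝ᵥ zvec i (D l)) • vecMulVec (zvec i (D l)) (zvec i (D l))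

/-- Sample scatter matrix `(1/m) ∑_l z⁽ˡ⁾ (z⁽ˡ⁾)ᵀ`. -/
def sampleScatter {n m : ℕ} (i : Fin n) (D : Fin m → (Fin n → Bool)) :
    Matrix (Fin n) (Fin n) ℝ :=
  (1 / (m : ℝ)) • ∑ l, vecMulVec (zvec i (D l)) (zvec i (D l))

/-- Probability of the event `E` under `m` i.i.d. draws from `p`. -/
def iidProb {X : Type*} [Fintype X] (p : X → ℝ) (m : ℕ)
    (E : Set (Fin m → X)) : ℝ :=
  ∑ D : Fin m → X, E.indicator (fun D => ∏ l, p (D l)) D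

/-- `ρ` is the minimum payoff over the PSNE set of `(W, b)`. -/
def isMinPayoff {n : ℕ} (W : Matrix (Fin n) (Fin n) ℝ) (b : Fin n → ℝ)
    (ρ : ℝ) : Prop :=
  IsLeast {r : ℝ | ∃ x ∈ NEset W b, ∃ i, r = payoff W b i x} ρ


set_option linter.unusedSectionVars false
set_option linter.unusedVariables false
set_option maxHeartbeats 1000000
open scoped MatrixOrder in
lemma Matrix.PosSemidef.exists_sqrt_aux {ι : Type*} [Fintype ι] [DecidableEq ι]
    {P : Matrix ι ι ℝ} (hP : P.PosSemidef) : ∃ R : Matrix ι ι ℝ, R.PosSemidef ∧ R ^ 2 = P :=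
  ⟨CFC.sqrt P, Matrix.nonneg_iff_posSemidef.mp (CFC.sqrt_nonneg P), CFC.sq_sqrt P hP.nonneg⟩

noncomputable def Matrix.PosSemidef.sqrt {ι : Type*} [Fintype ι] [DecidableEq ι]
    {P : Matrix ι ι ℝ} (hP : P.PosSemidef) : Matrix ι ι ℝ :=
  Classical.choose hP.exists_sqrt_aux

lemma Matrix.PosSemidef.sq_sqrt {ι : Type*} [Fintype ι] [DecidableEq ι]
    {P : Matrix ι ι ℝ} (hP : P.PosSemidef) : hP.sqrt ^ 2 = P :=
  (Classical.choose_spec hP.exists_sqrt_aux).2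

lemma Matrix.PosSemidef.posSemidef_sqrt {ι : Type*} [Fintype ι] [DecidableEq ι]
    {P : Matrix ι ι ℝ} (hP : P.PosSemidef) : hP.sqrt.PosSemidef :=
  (Classical.choose_spec hP.exists_sqrt_aux).1

section
namespace ScatterAux

variable {ι : Type*} [Fintype ι] [DecidableEq ι]

lemma dot_double (u v : ι → ℝ) (M : Matrix ι ι ℝ) :
    u ⬝ᵥ M *ᵥ v = ∑ i, ∑ j, u i * M i j * v j := by
  simp [dotProduct, Matrix.mulVec, Finset.mul_sum, mul_assoc]

lemma sum_mulVec' {κ : Type*} (s : Finset κ) (f : κ → Matrix ι ι ℝ) (v : ι → ℝ) :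
    (∑ x ∈ s, f x) *ᵥ v = ∑ x ∈ s, f x *ᵥ v := by
  funext i
  simp only [Matrix.mulVec, dotProduct, Matrix.sum_apply, Finset.sum_mul,
    Finset.sum_apply]
  rw [Finset.sum_comm]

lemma quad_vmv (u y : ι → ℝ) : y ⬝ᵥ (vecMulVec u u) *ᵥ y = (u ⬝ᵥ y) * (u ⬝ᵥ y) := by
  rw [dot_double, dotProduct, Finset.sum_mul_sum]
  refine Finset.sum_congr rfl fun i _ => Finset.sum_congr rfl fun j _ => ?_
  simp [Matrix.vecMulVec_apply]; ring

lemma trace_vmv_mul (u : ι → ℝ) (M : Matrix ι ι ℝ) :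
    (vecMulVec u u * M).trace = u ⬝ᵥ M *ᵥ u := by
  rw [dot_double]
  simp only [Matrix.trace, Matrix.diag, Matrix.mul_apply, Matrix.vecMulVec_apply]
  rw [Finset.sum_comm]
  refine Finset.sum_congr rfl fun i _ => Finset.sum_congr rfl fun j _ => ?_
  ring

lemma vmv_mulVec (a b v : ι → ℝ) : vecMulVec a b *ᵥ v = (b ⬝ᵥ v) • a := by
  funext i
  simp [Matrix.mulVec, dotProduct, Matrix.vecMulVec_apply, Finset.sum_mul, Finset.mul_sum]
  refine Finset.sum_congr rfl fun j _ => by ring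

lemma dot_sandwich (B C : Matrix ι ι ℝ) (w u : ι → ℝ) :
    u ⬝ᵥ (B * vecMulVec w w * C) *ᵥ u = (u ⬝ᵥ B *ᵥ w) * (w ⬝ᵥ C *ᵥ u) := by
  rw [Matrix.mul_assoc, ← Matrix.mulVec_mulVec, ← Matrix.mulVec_mulVec, vmv_mulVec,
    Matrix.mulVec_smul, dotProduct_smul]
  simp [smul_eq_mul]; ring

lemma dot_shift (M : Matrix ι ι ℝ) (u w : ι → ℝ) :
    u ⬝ᵥ M *ᵥ w = (Mᵀ *ᵥ u) ⬝ᵥ w := by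
  rw [Matrix.dotProduct_mulVec, Matrix.mulVec_transpose]

lemma dot_sum {κ : Type*} (s : Finset κ) (u : ι → ℝ) (w : κ → ι → ℝ) :
    u ⬝ᵥ (∑ x ∈ s, w x) = ∑ x ∈ s, u ⬝ᵥ w x := by
  simp only [dotProduct, Finset.sum_apply, Finset.mul_sum]
  rw [Finset.sum_comm]

lemma psd_weighted {κ : Type*} (s : Finset κ) (p : κ → ℝ) (g : κ → ι → ℝ)
    (hp : ∀ x ∈ s, 0 ≤ p x) :
    (∑ x ∈ s, p x • vecMulVec (g x) (g x)).PosSemidef := by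
  refine Matrix.PosSemidef.of_dotProduct_mulVec_nonneg ?_ ?_
  · rw [Matrix.IsHermitian, Matrix.conjTranspose_eq_transpose_of_trivial]
    ext i j
    simp only [Matrix.transpose_apply, Matrix.sum_apply, Matrix.smul_apply,
      Matrix.vecMulVec_apply, smul_eq_mul]
    refine Finset.sum_congr rfl fun x _ => by ring
  · intro y
    simp only [star_trivial]
    rw [sum_mulVec', dot_sum]
    refine Finset.sum_nonneg fun x hx => ?_
    rw [Matrix.smul_mulVec, dotProduct_smul, smul_eq_mul]
    have : y ⬝ᵥ vecMulVec (g x) (g x) *ᵥ y = (g x ⬝ᵥ y) * (g x ⬝ᵥ y) := quad_vmv _ _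
    rw [this]
    exact mul_nonneg (hp x hx) (mul_self_nonneg _)

lemma psd_quad_nonneg {M : Matrix ι ι ℝ} (hM : M.PosSemidef) (u : ι → ℝ) :
    0 ≤ u ⬝ᵥ M *ᵥ u := by
  have := hM.dotProduct_mulVec_nonneg u
  simpa using this

lemma real_symm_of_herm {M : Matrix ι ι ℝ} (hM : M.IsHermitian) : Mᵀ = M := by
  have := hM.eq
  rwa [Matrix.conjTranspose_eq_transpose_of_trivial] at this

lemma quad_single (M : Matrix ι ι ℝ) (i : ι) :
    (Pi.single i (1:ℝ)) ⬝ᵥ M *ᵥ (Pi.single i 1) = M i i := by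
  rw [dot_double]
  simp [Pi.single_apply, Finset.sum_ite_eq', mul_ite, ite_mul]

lemma trace_nonneg_psd {M : Matrix ι ι ℝ} (hM : M.PosSemidef) : 0 ≤ M.trace := by
  rw [Matrix.trace]
  refine Finset.sum_nonneg fun i _ => ?_
  have h := psd_quad_nonneg hM (Pi.single i 1)
  rwa [quad_single] at h

lemma dot_self_nonneg (u : ι → ℝ) : 0 ≤ u ⬝ᵥ u :=
  Finset.sum_nonneg fun i _ => mul_self_nonneg _

lemma CS_dot (v w : ι → ℝ) : (v ⬝ᵥ w) ^ 2 ≤ (v ⬝ᵥ v) * (w ⬝ᵥ w) := by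
  have h := Finset.sum_mul_sq_le_sq_mul_sq Finset.univ v w
  simp only [dotProduct]
  calc (∑ i, v i * w i)^2 ≤ (∑ i, v i^2) * (∑ i, w i^2) := h
  _ = (∑ i, v i * v i) * (∑ i, w i * w i) := by simp [sq]

lemma quad_le_trace {P : Matrix ι ι ℝ} (hP : P.PosSemidef) (u : ι → ℝ) :
    u ⬝ᵥ P *ᵥ u ≤ (u ⬝ᵥ u) * P.trace := by
  set R := hP.sqrt with hRdef
  have hR2 : R * R = P := by
    have := hP.sq_sqrt
    rwa [sq] at this
  have hRsym : Rᵀ = R := real_symm_of_herm hP.posSemidef_sqrt.isHermitian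
  have hquad : u ⬝ᵥ P *ᵥ u = (R *ᵥ u) ⬝ᵥ (R *ᵥ u) := by
    rw [← hR2, ← Matrix.mulVec_mulVec, dot_shift, hRsym]
  rw [hquad]
  have htr : P.trace = ∑ i, ∑ j, R i j * R i j := by
    have hsym2 : ∀ i j, R j i = R i j := by
      intro i j
      rw [← Matrix.transpose_apply R i j, hRsym]
    rw [← hR2]
    simp only [Matrix.trace, Matrix.diag, Matrix.mul_apply]
    refine Finset.sum_congr rfl fun i _ => Finset.sum_congr rfl fun j _ => ?_
    rw [hsym2 i j]
  rw [htr]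
  have hRu : ∀ i, (R *ᵥ u) i = ∑ j, R i j * u j := fun i => rfl
  calc (R *ᵥ u) ⬝ᵥ (R *ᵥ u) = ∑ i, (∑ j, R i j * u j)^2 := by
        simp only [dotProduct, hRu, sq]
  _ ≤ ∑ i, (∑ j, R i j ^2) * (∑ j, u j ^2) :=
        Finset.sum_le_sum fun i _ => Finset.sum_mul_sq_le_sq_mul_sq Finset.univ _ _
  _ = (u ⬝ᵥ u) * ∑ i, ∑ j, R i j * R i j := by
        rw [← Finset.sum_mul]
        simp only [dotProduct, sq]
        ring

lemma trace_mul_le {H A : Matrix ι ι ℝ} (hH : H.PosSemidef) (Dmax : ℝ)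
    (hA : ∀ y, y ⬝ᵥ A *ᵥ y ≤ Dmax * (y ⬝ᵥ y)) : (H * A).trace ≤ Dmax * H.trace := by
  set R := hH.sqrt with hRdef
  have hR2 : R * R = H := by have := hH.sq_sqrt; rwa [sq] at this
  have hRsym : Rᵀ = R := real_symm_of_herm hH.posSemidef_sqrt.isHermitian
  have key : (H * A).trace = (R * A * R).trace := by
    rw [← hR2, Matrix.mul_assoc, Matrix.trace_mul_comm R (R * A)]
  rw [key]
  have hdiag : ∀ i : ι, (R * A * R) i i ≤ Dmax * (H i i) := by
    intro i
    have e1 : (R * A * R) i i = (Pi.single i 1) ⬝ᵥ (R * A * R) *ᵥ (Pi.single i 1) :=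
      (quad_single _ i).symm
    have e2 : (Pi.single i (1:ℝ)) ⬝ᵥ (R * A * R) *ᵥ (Pi.single i 1)
        = (R *ᵥ Pi.single i 1) ⬝ᵥ A *ᵥ (R *ᵥ Pi.single i 1) := by
      rw [Matrix.mul_assoc, ← Matrix.mulVec_mulVec, ← Matrix.mulVec_mulVec,
        dot_shift, hRsym]
    have e3 : H i i = (R *ᵥ Pi.single i 1) ⬝ᵥ (R *ᵥ Pi.single i 1) := by
      rw [← quad_single H i, ← hR2, ← Matrix.mulVec_mulVec, dot_shift, hRsym]
    rw [e1, e2, e3]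
    exact hA _
  calc (R * A * R).trace = ∑ i, (R * A * R) i i := rfl
  _ ≤ ∑ i, Dmax * (H i i) := Finset.sum_le_sum fun i _ => hdiag i
  _ = Dmax * H.trace := by rw [← Finset.mul_sum]; rfl

lemma seq_key (h : ℕ → ℝ) (h0 : ∀ t, 0 ≤ h t)
    (hlc : ∀ t, h (t+1) ^ 2 ≤ h t * h (t+2))
    (hz : ∀ t, h (t+1) = 0 → h (t+2) = 0) :
    ∀ a b : ℕ, h a * h b ≤ h 0 * h (a + b) := by
  have step : ∀ a b : ℕ, a ≤ b → h (a+1) * h b ≤ h a * h (b+1) := by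
    intro a b hab
    induction b, hab using Nat.le_induction with
    | base => ring_nf; exact le_of_eq (by ring)
    | succ b hab ih =>
      by_cases hb1 : h (b+1) = 0
      · rw [hb1, mul_zero]
        exact mul_nonneg (h0 _) (h0 _)
      · by_cases hb0 : h b = 0
        · cases b with
          | zero =>
            exfalso
            apply hb1
            have h1 := hlc 0
            rw [hb0, zero_mul] at h1
            have h2 : h (0+1)^2 = 0 := le_antisymm h1 (sq_nonneg _)
            exact (pow_eq_zero_iff two_ne_zero).mp h2
          | succ b' => exact absurd (hz b' hb0) hb1
        · have hbpos : 0 < h b := lt_of_le_of_ne (h0 b) (Ne.symm hb0)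
          have hb1pos : 0 < h (b+1) := lt_of_le_of_ne (h0 _) (Ne.symm hb1)
          have key : (h (a+1) * h (b+1)) * (h b * h (b+1))
              ≤ (h a * h (b+2)) * (h b * h (b+1)) := by
            calc (h (a+1) * h (b+1)) * (h b * h (b+1))
                = (h (a+1) * h b) * (h (b+1))^2 := by ring
            _ ≤ (h a * h (b+1)) * (h (b+1))^2 :=
                mul_le_mul_of_nonneg_right ih (sq_nonneg _)
            _ ≤ (h a * h (b+1)) * (h b * h (b+2)) :=
                mul_le_mul_of_nonneg_left (hlc b)
                  (mul_nonneg (h0 _) (h0 _))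
            _ = (h a * h (b+2)) * (h b * h (b+1)) := by ring
          exact le_of_mul_le_mul_right key (mul_pos hbpos hb1pos)
  have claim : ∀ a b : ℕ, a ≤ b → h a * h b ≤ h 0 * h (a + b) := by
    intro a
    induction a with
    | zero => intro b _; simp
    | succ a ih =>
      intro b hab
      have h1 : h (a+1) * h b ≤ h a * h (b+1) := step a b (by omega)
      have h2 : h a * h (b+1) ≤ h 0 * h (a + (b+1)) := ih (b+1) (by omega)
      have heq : a + (b + 1) = (a + 1) + b := by omega
      rw [heq] at h2
      exact le_trans h1 h2
  intro a b
  rcases le_total a b with hab | hba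
  · exact claim a b hab
  · have := claim b a hba
    rw [mul_comm (h b) (h a), Nat.add_comm b a] at this
    exact this

lemma logconv {H : Matrix ι ι ℝ} (hH : H.PosSemidef) (u : ι → ℝ) (a b : ℕ) :
    (u ⬝ᵥ H ^ a *ᵥ u) * (u ⬝ᵥ H ^ b *ᵥ u) ≤ (u ⬝ᵥ u) * (u ⬝ᵥ H ^ (a + b) *ᵥ u) := by
  have hQ2 : hH.sqrt ^ 2 = H := hH.sq_sqrt
  set Q : Matrix ι ι ℝ := hH.sqrt with hQdef
  have hQsym : Qᵀ = Q := real_symm_of_herm hH.posSemidef_sqrt.isHermitian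
  have hdot : ∀ s t : ℕ, (Q ^ s *ᵥ u) ⬝ᵥ (Q ^ t *ᵥ u) = u ⬝ᵥ Q ^ (s + t) *ᵥ u := by
    intro s t
    calc (Q ^ s *ᵥ u) ⬝ᵥ (Q ^ t *ᵥ u)
        = ((Q ^ s)ᵀ *ᵥ u) ⬝ᵥ (Q ^ t *ᵥ u) := by rw [Matrix.transpose_pow, hQsym]
    _ = u ⬝ᵥ Q ^ s *ᵥ (Q ^ t *ᵥ u) := (dot_shift _ _ _).symm
    _ = u ⬝ᵥ (Q ^ s * Q ^ t) *ᵥ u := by rw [Matrix.mulVec_mulVec]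
    _ = u ⬝ᵥ Q ^ (s + t) *ᵥ u := by rw [← pow_add]
  have hc : ∀ t : ℕ, u ⬝ᵥ H ^ t *ᵥ u = (Q ^ t *ᵥ u) ⬝ᵥ (Q ^ t *ᵥ u) := by
    intro t
    rw [hdot t t, ← hQ2, ← pow_mul, two_mul]
  have h0 : ∀ t, 0 ≤ u ⬝ᵥ H ^ t *ᵥ u := by
    intro t; rw [hc t]; exact dot_self_nonneg _
  have hlc : ∀ t, (u ⬝ᵥ H ^ (t+1) *ᵥ u) ^ 2
      ≤ (u ⬝ᵥ H ^ t *ᵥ u) * (u ⬝ᵥ H ^ (t+2) *ᵥ u) := by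
    intro t
    have e1 : u ⬝ᵥ H ^ (t+1) *ᵥ u = (Q ^ t *ᵥ u) ⬝ᵥ (Q ^ (t+2) *ᵥ u) := by
      rw [hc (t+1), hdot t (t+2), hdot (t+1) (t+1)]
      have : t + (t + 2) = (t + 1) + (t + 1) := by omega
      rw [this]
    have e2 := CS_dot (Q ^ t *ᵥ u) (Q ^ (t+2) *ᵥ u)
    rw [← e1, ← hc t, ← hc (t+2)] at e2
    exact e2
  have hz : ∀ t, u ⬝ᵥ H ^ (t+1) *ᵥ u = 0 → u ⬝ᵥ H ^ (t+2) *ᵥ u = 0 := by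
    intro t ht
    have hwz : Q ^ (t+1) *ᵥ u = 0 := by
      have hsum : (Q ^ (t+1) *ᵥ u) ⬝ᵥ (Q ^ (t+1) *ᵥ u) = 0 := by
        rw [← hc (t+1)]; exact ht
      funext i
      have hnn : ∀ j ∈ Finset.univ, 0 ≤ (Q ^ (t+1) *ᵥ u) j * (Q ^ (t+1) *ᵥ u) j :=
        fun j _ => mul_self_nonneg _
      have := (Finset.sum_eq_zero_iff_of_nonneg hnn).1 hsum i (Finset.mem_univ i)
      have := mul_self_eq_zero.1 this
      simpa using this
    have hwz2 : Q ^ (t+2) *ᵥ u = 0 := by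
      have hp : Q ^ (t+2) = Q * Q ^ (t+1) := by rw [pow_succ']
      rw [hp, ← Matrix.mulVec_mulVec, hwz, Matrix.mulVec_zero]
    rw [hc (t+2), hwz2]
    simp [dotProduct]
  have := seq_key (fun t => u ⬝ᵥ H ^ t *ᵥ u) h0 hlc hz a b
  simpa using this

lemma rayleigh_pow {N : Matrix ι ι ℝ} (hN : N.PosSemidef) (y : ι → ℝ) (k : ℕ) :
    (y ⬝ᵥ N *ᵥ y) ^ (k+1) ≤ (y ⬝ᵥ y) ^ k * (y ⬝ᵥ N ^ (k+1) *ᵥ y) := by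
  induction k with
  | zero => simp
  | succ k ih =>
    have h1 : (y ⬝ᵥ N *ᵥ y) ^ (k+2) = (y ⬝ᵥ N *ᵥ y)^(k+1) * (y ⬝ᵥ N *ᵥ y) := by ring
    have hNy : 0 ≤ y ⬝ᵥ N *ᵥ y := psd_quad_nonneg hN y
    have h2 : (y ⬝ᵥ N *ᵥ y)^(k+1) * (y ⬝ᵥ N *ᵥ y)
        ≤ ((y ⬝ᵥ y) ^ k * (y ⬝ᵥ N ^ (k+1) *ᵥ y)) * (y ⬝ᵥ N *ᵥ y) :=
      mul_le_mul_of_nonneg_right ih hNy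
    have h3 : (y ⬝ᵥ N ^ (k+1) *ᵥ y) * (y ⬝ᵥ N *ᵥ y)
        ≤ (y ⬝ᵥ y) * (y ⬝ᵥ N ^ (k+2) *ᵥ y) := by
      have := logconv hN y (k+1) 1
      rw [pow_one] at this
      have e : k + 1 + 1 = k + 2 := rfl
      rw [e] at this
      exact this
    calc (y ⬝ᵥ N *ᵥ y) ^ (k+2) = (y ⬝ᵥ N *ᵥ y)^(k+1) * (y ⬝ᵥ N *ᵥ y) := h1
    _ ≤ ((y ⬝ᵥ y) ^ k * (y ⬝ᵥ N ^ (k+1) *ᵥ y)) * (y ⬝ᵥ N *ᵥ y) := h2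
    _ = (y ⬝ᵥ y) ^ k * ((y ⬝ᵥ N ^ (k+1) *ᵥ y) * (y ⬝ᵥ N *ᵥ y)) := by ring
    _ ≤ (y ⬝ᵥ y) ^ k * ((y ⬝ᵥ y) * (y ⬝ᵥ N ^ (k+2) *ᵥ y)) :=
        mul_le_mul_of_nonneg_left h3 (pow_nonneg (dot_self_nonneg y) k)
    _ = (y ⬝ᵥ y) ^ (k+1) * (y ⬝ᵥ N ^ (k+2) *ᵥ y) := by ring

lemma trace_pow_le {N : Matrix ι ι ℝ} (hN : N.PosSemidef) (k : ℕ) :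
    (N ^ (k+1)).trace ≤ N.trace ^ (k+1) := by
  induction k with
  | zero => simp
  | succ k ih =>
    have h1 : N ^ (k+2) = N ^ (k+1) * N := by rw [← pow_succ]
    have h2 : (N ^ (k+1) * N).trace ≤ N.trace * (N ^ (k+1)).trace := by
      refine trace_mul_le (hN.pow (k+1)) N.trace ?_
      intro y
      have := quad_le_trace hN y
      calc y ⬝ᵥ N *ᵥ y ≤ (y ⬝ᵥ y) * N.trace := this
      _ = N.trace * (y ⬝ᵥ y) := by ring
    calc (N ^ (k+2)).trace = (N ^ (k+1) * N).trace := by rw [h1]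
    _ ≤ N.trace * (N ^ (k+1)).trace := h2
    _ ≤ N.trace * N.trace ^ (k+1) :=
        mul_le_mul_of_nonneg_left ih (trace_nonneg_psd hN)
    _ = N.trace ^ (k+2) := by ring

lemma hockey (j : ℕ) : ∀ n : ℕ, ∑ a ∈ Finset.range n, (a.choose j) = n.choose (j+1) := by
  intro n
  induction n with
  | zero => simp
  | succ n ih =>
    rw [Finset.sum_range_succ, ih, Nat.choose_succ_succ']
    omega

lemma telescope (H X : Matrix ι ι ℝ) : ∀ k : ℕ,
    (H + X) ^ (k+1) = H ^ (k+1) + ∑ i ∈ Finset.range (k+1), H ^ i * X * (H + X) ^ (k - i) := by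
  intro k
  induction k with
  | zero => simp [pow_one]
  | succ k ih =>
    have ihH : H * (H + X) ^ (k+1)
        = H * (H ^ (k+1) + ∑ i ∈ Finset.range (k+1), H ^ i * X * (H + X) ^ (k - i)) := by
      rw [ih]
    have e0 : H ^ 0 * X * (H + X) ^ (k + 1 - 0) = X * (H + X) ^ (k+1) := by
      simp [pow_zero]
    have e1 : ∑ i ∈ Finset.range (k+1), H ^ (i+1) * X * (H + X) ^ (k + 1 - (i+1))
        = H * ∑ i ∈ Finset.range (k+1), H ^ i * X * (H + X) ^ (k - i) := by
      rw [Finset.mul_sum]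
      refine Finset.sum_congr rfl fun i hi => ?_
      have h2 : k + 1 - (i + 1) = k - i := by omega
      rw [h2, pow_succ']
      simp [Matrix.mul_assoc]
    calc (H + X) ^ (k+2) = (H + X) * (H + X) ^ (k+1) := by
          conv_lhs => rw [pow_succ']
    _ = H * (H + X) ^ (k+1) + X * (H + X) ^ (k+1) := by rw [Matrix.add_mul]
    _ = H ^ (k+2) + (H * (∑ i ∈ Finset.range (k+1), H ^ i * X * (H + X) ^ (k - i))
          + X * (H + X) ^ (k+1)) := by
          rw [ihH, Matrix.mul_add, ← pow_succ', add_assoc]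
    _ = H ^ (k+2) + ∑ i ∈ Finset.range (k+2), H ^ i * X * (H + X) ^ (k + 1 - i) := by
          rw [Finset.sum_range_succ' (fun i => H ^ i * X * (H + X) ^ (k + 1 - i)) (k+1), e0, e1]

lemma e_bound {H : Matrix ι ι ℝ} (hH : H.PosSemidef) (ζ : ι → ℝ) :
    ∀ a b : ℕ, ζ ⬝ᵥ ((H + vecMulVec ζ ζ) ^ a * H ^ b) *ᵥ ζ
      ≤ ∑ j ∈ Finset.range (a+1),
          ((a.choose j : ℝ)) * (ζ ⬝ᵥ ζ) ^ j * (ζ ⬝ᵥ H ^ (a + b - j) *ᵥ ζ) := by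
  have hcnn : ∀ t : ℕ, 0 ≤ ζ ⬝ᵥ H ^ t *ᵥ ζ := fun t => psd_quad_nonneg (hH.pow t) ζ
  have hsnn : (0:ℝ) ≤ ζ ⬝ᵥ ζ := dot_self_nonneg ζ
  have hC : ∀ x y : ℕ, (ζ ⬝ᵥ H ^ x *ᵥ ζ) * (ζ ⬝ᵥ H ^ y *ᵥ ζ)
      ≤ (ζ ⬝ᵥ ζ) * (ζ ⬝ᵥ H ^ (x+y) *ᵥ ζ) := fun x y => logconv hH ζ x y
  intro a
  induction a with
  | zero =>
    intro b
    simp [pow_zero, Matrix.one_mul]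
  | succ a ih =>
    intro b
    set X := vecMulVec ζ ζ with hX
    set s : ℝ := ζ ⬝ᵥ ζ with hs
    set c : ℕ → ℝ := fun t => ζ ⬝ᵥ H ^ t *ᵥ ζ with hc
    have hsplit : (H + X) ^ (a+1) * H ^ b
        = (H + X) ^ a * H ^ (b+1) + (H + X) ^ a * X * H ^ b := by
      rw [pow_succ, Matrix.mul_assoc, Matrix.add_mul, Matrix.mul_add, ← pow_succ',
        ← Matrix.mul_assoc ((H + X) ^ a) X (H ^ b)]
    have hdotsplit : ζ ⬝ᵥ ((H + X) ^ (a+1) * H ^ b) *ᵥ ζ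
        = ζ ⬝ᵥ ((H + X) ^ a * H ^ 0) *ᵥ ζ * c b
          + ζ ⬝ᵥ ((H + X) ^ a * H ^ (b+1)) *ᵥ ζ := by
      rw [hsplit, Matrix.add_mulVec, dotProduct_add]
      rw [hX, dot_sandwich]
      rw [pow_zero, Matrix.mul_one]
      ring
    rw [hdotsplit]
    have step1 : ζ ⬝ᵥ ((H + X) ^ a * H ^ 0) *ᵥ ζ * c b
        ≤ ∑ j ∈ Finset.range (a+1), (a.choose j : ℝ) * s ^ j * (s * c (a + b - j)) := by
      calc ζ ⬝ᵥ ((H + X) ^ a * H ^ 0) *ᵥ ζ * c b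
          ≤ (∑ j ∈ Finset.range (a+1), (a.choose j : ℝ) * s ^ j * c (a + 0 - j)) * c b :=
            mul_le_mul_of_nonneg_right (ih 0) (hcnn b)
      _ = ∑ j ∈ Finset.range (a+1), (a.choose j : ℝ) * s ^ j * (c (a - j) * c b) := by
            rw [Finset.sum_mul]
            refine Finset.sum_congr rfl fun j hj => ?_
            have : a + 0 - j = a - j := by omega
            rw [this]; ring
      _ ≤ ∑ j ∈ Finset.range (a+1), (a.choose j : ℝ) * s ^ j * (s * c (a + b - j)) := by
            refine Finset.sum_le_sum fun j hj => ?_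
            have hj' : j ≤ a := by
              have := Finset.mem_range.1 hj; omega
            have h1 : c (a - j) * c b ≤ s * c ((a - j) + b) := hC (a-j) b
            have h2 : (a - j) + b = a + b - j := by omega
            rw [h2] at h1
            exact mul_le_mul_of_nonneg_left h1
              (mul_nonneg (Nat.cast_nonneg _) (pow_nonneg hsnn j))
    have step2 : ζ ⬝ᵥ ((H + X) ^ a * H ^ (b+1)) *ᵥ ζ
        ≤ ∑ j ∈ Finset.range (a+1), (a.choose j : ℝ) * s ^ j * c (a + (b+1) - j) :=
      ih (b+1)
    have keyeq : ∑ j ∈ Finset.range (a+2), ((a+1).choose j : ℝ) * s ^ j * c (a + 1 + b - j)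
        = (∑ j ∈ Finset.range (a+1), (a.choose j : ℝ) * s ^ j * (s * c (a + b - j)))
          + ∑ j ∈ Finset.range (a+1), (a.choose j : ℝ) * s ^ j * c (a + (b+1) - j) := by
      rw [Finset.sum_range_succ' (fun j => ((a+1).choose j : ℝ) * s ^ j * c (a + 1 + b - j)) (a+1)]
      have lhs1 : ∑ j ∈ Finset.range (a+1),
            ((a+1).choose (j+1) : ℝ) * s ^ (j+1) * c (a + 1 + b - (j+1))
          = (∑ j ∈ Finset.range (a+1), (a.choose j : ℝ) * s ^ j * (s * c (a + b - j)))
            + ∑ j ∈ Finset.range (a+1), (a.choose (j+1) : ℝ) * s ^ (j+1) * c (a + b - j) := by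
        rw [← Finset.sum_add_distrib]
        refine Finset.sum_congr rfl fun j hj => ?_
        have he : a + 1 + b - (j+1) = a + b - j := by omega
        rw [he, Nat.choose_succ_succ']
        push_cast
        ring
      rw [lhs1]
      have lhs2 : ∑ j ∈ Finset.range (a+1), (a.choose (j+1) : ℝ) * s ^ (j+1) * c (a + b - j)
          = ∑ j ∈ Finset.range a, (a.choose (j+1) : ℝ) * s ^ (j+1) * c (a + b - j) := by
        rw [Finset.sum_range_succ]
        have : (a.choose (a+1) : ℝ) = 0 := by
          rw [Nat.choose_eq_zero_of_lt (by omega)]; simp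
        rw [this]; ring
      have rhs2 : ∑ j ∈ Finset.range (a+1), (a.choose j : ℝ) * s ^ j * c (a + (b+1) - j)
          = (∑ j ∈ Finset.range a, (a.choose (j+1) : ℝ) * s ^ (j+1) * c (a + b - j))
            + c (a + 1 + b) := by
        rw [Finset.sum_range_succ' (fun j => (a.choose j : ℝ) * s ^ j * c (a + (b+1) - j)) a]
        congr 1
        · refine Finset.sum_congr rfl fun j hj => ?_
          have : a + (b+1) - (j+1) = a + b - j := by omega
          rw [this]
        · have : a + (b+1) - 0 = a + 1 + b := by omega
          rw [this]; simp
      rw [lhs2, rhs2]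
      have he0 : a + 1 + b - 0 = a + 1 + b := by omega
      rw [he0, Nat.choose_zero_right]
      push_cast
      ring
    rw [keyeq]
    exact add_le_add step1 step2

lemma trace_cyclic_vmv (B C : Matrix ι ι ℝ) (ζ : ι → ℝ) :
    (B * vecMulVec ζ ζ * C).trace = ζ ⬝ᵥ (C * B) *ᵥ ζ := by
  rw [Matrix.trace_mul_comm (B * vecMulVec ζ ζ) C, ← Matrix.mul_assoc,
    Matrix.trace_mul_comm (C * B) (vecMulVec ζ ζ), trace_vmv_mul]

lemma core_trace {H : Matrix ι ι ℝ} (hH : H.PosSemidef) (ζ : ι → ℝ) (k : ℕ) :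
    ((H + vecMulVec ζ ζ) ^ (k+1)).trace
      ≤ (H ^ (k+1)).trace + ∑ j ∈ Finset.range (k+1),
          (((k+1).choose (j+1) : ℝ)) * (ζ ⬝ᵥ ζ) ^ j * (ζ ⬝ᵥ H ^ (k - j) *ᵥ ζ) := by
  rw [telescope H (vecMulVec ζ ζ) k]
  rw [Matrix.trace_add, Matrix.trace_sum]
  have hterm : ∀ i ∈ Finset.range (k+1),
      (H ^ i * vecMulVec ζ ζ * (H + vecMulVec ζ ζ) ^ (k - i)).trace
        ≤ ∑ j ∈ Finset.range (k+1),
            ((k-i).choose j : ℝ) * (ζ ⬝ᵥ ζ) ^ j * (ζ ⬝ᵥ H ^ (k - j) *ᵥ ζ) := by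
    intro i hi
    have hik : i ≤ k := by have := Finset.mem_range.1 hi; omega
    rw [trace_cyclic_vmv]
    have h1 := e_bound hH ζ (k - i) i
    have h2 : ∀ j, (k - i) + i - j = k - j := by intro j; omega
    have h3 : ∑ j ∈ Finset.range (k-i+1),
          ((k-i).choose j : ℝ) * (ζ ⬝ᵥ ζ) ^ j * (ζ ⬝ᵥ H ^ ((k-i) + i - j) *ᵥ ζ)
        = ∑ j ∈ Finset.range (k-i+1),
          ((k-i).choose j : ℝ) * (ζ ⬝ᵥ ζ) ^ j * (ζ ⬝ᵥ H ^ (k - j) *ᵥ ζ) := by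
      refine Finset.sum_congr rfl fun j _ => by rw [h2 j]
    rw [h3] at h1
    refine le_trans h1 (le_of_eq ?_)
    refine Finset.sum_subset ?_ ?_
    · intro j hj
      rw [Finset.mem_range] at hj ⊢
      omega
    · intro j hj1 hj2
      rw [Finset.mem_range] at hj1 hj2
      have : (k-i).choose j = 0 := Nat.choose_eq_zero_of_lt (by omega)
      rw [this]
      simp
  have hsum : ∑ i ∈ Finset.range (k+1),
      (H ^ i * vecMulVec ζ ζ * (H + vecMulVec ζ ζ) ^ (k - i)).trace
        ≤ ∑ j ∈ Finset.range (k+1),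
            (((k+1).choose (j+1) : ℝ)) * (ζ ⬝ᵥ ζ) ^ j * (ζ ⬝ᵥ H ^ (k - j) *ᵥ ζ) := by
    calc ∑ i ∈ Finset.range (k+1),
        (H ^ i * vecMulVec ζ ζ * (H + vecMulVec ζ ζ) ^ (k - i)).trace
        ≤ ∑ i ∈ Finset.range (k+1), ∑ j ∈ Finset.range (k+1),
            ((k-i).choose j : ℝ) * (ζ ⬝ᵥ ζ) ^ j * (ζ ⬝ᵥ H ^ (k - j) *ᵥ ζ) :=
          Finset.sum_le_sum hterm
    _ = ∑ j ∈ Finset.range (k+1), ∑ i ∈ Finset.range (k+1),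
            ((k-i).choose j : ℝ) * (ζ ⬝ᵥ ζ) ^ j * (ζ ⬝ᵥ H ^ (k - j) *ᵥ ζ) :=
          Finset.sum_comm
    _ = ∑ j ∈ Finset.range (k+1),
            (((k+1).choose (j+1) : ℝ)) * (ζ ⬝ᵥ ζ) ^ j * (ζ ⬝ᵥ H ^ (k - j) *ᵥ ζ) := by
          refine Finset.sum_congr rfl fun j _ => ?_
          rw [← Finset.sum_mul, ← Finset.sum_mul]
          congr 2
          have hrefl : ∑ i ∈ Finset.range (k+1), ((k-i).choose j : ℝ)
              = ∑ i ∈ Finset.range (k+1), (i.choose j : ℝ) := by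
            have h := Finset.sum_range_reflect (fun i => ((i).choose j : ℝ)) (k+1)
            calc ∑ i ∈ Finset.range (k+1), ((k-i).choose j : ℝ)
                = ∑ i ∈ Finset.range (k+1), ((k+1-1-i).choose j : ℝ) := by
                  refine Finset.sum_congr rfl fun i hi => ?_
                  congr 2 <;> omega
            _ = _ := h
          rw [hrefl, ← Nat.cast_sum, hockey j (k+1)]
  exact add_le_add le_rfl hsum

noncomputable def Gexp (θ s0 : ℝ) (M : Matrix ι ι ℝ) : ℝ :=
  s0 + ∑' k : ℕ, θ^(k+1) * (M^(k+1)).trace / ((k+1).factorial : ℝ)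

noncomputable def gquad (θ : ℝ) (M : Matrix ι ι ℝ) (u : ι → ℝ) : ℝ :=
  ∑' k : ℕ, θ^k * (u ⬝ᵥ M^k *ᵥ u) / (k.factorial : ℝ)

noncomputable def gammaS (θ s : ℝ) : ℝ := ∑' j : ℕ, θ^(j+1) * s^j / ((j+1).factorial : ℝ)

lemma summable_shift (x : ℝ) : Summable (fun k : ℕ => x^(k+1) / ((k+1).factorial : ℝ)) :=
  (Real.summable_pow_div_factorial x).comp_injective Nat.succ_injective

lemma Gterm_nonneg {θ : ℝ} (hθ : 0 ≤ θ) {M : Matrix ι ι ℝ} (hM : M.PosSemidef) (k : ℕ) :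
    0 ≤ θ^(k+1) * (M^(k+1)).trace / ((k+1).factorial : ℝ) :=
  div_nonneg (mul_nonneg (pow_nonneg hθ _) (trace_nonneg_psd (hM.pow _))) (Nat.cast_nonneg _)

lemma summable_G {θ : ℝ} (hθ : 0 ≤ θ) {M : Matrix ι ι ℝ} (hM : M.PosSemidef) :
    Summable (fun k : ℕ => θ^(k+1) * (M^(k+1)).trace / ((k+1).factorial : ℝ)) := by
  refine Summable.of_nonneg_of_le (fun k => Gterm_nonneg hθ hM k) (fun k => ?_)
    (summable_shift (θ * M.trace))
  rw [mul_pow]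
  have h1 : (M^(k+1)).trace ≤ M.trace^(k+1) := trace_pow_le hM k
  have h2 : θ^(k+1) * (M^(k+1)).trace ≤ θ^(k+1) * M.trace^(k+1) :=
    mul_le_mul_of_nonneg_left h1 (pow_nonneg hθ _)
  exact div_le_div_of_nonneg_right h2 (by positivity) |>.trans (le_of_eq rfl)

lemma quad_pow_le {M : Matrix ι ι ℝ} (hM : M.PosSemidef) (u : ι → ℝ) (k : ℕ) :
    u ⬝ᵥ M^k *ᵥ u ≤ (u ⬝ᵥ u) * M.trace^k := by
  cases k with
  | zero => simp [Matrix.one_mulVec]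
  | succ k =>
    calc u ⬝ᵥ M^(k+1) *ᵥ u ≤ (u ⬝ᵥ u) * (M^(k+1)).trace := quad_le_trace (hM.pow _) u
    _ ≤ (u ⬝ᵥ u) * M.trace^(k+1) :=
        mul_le_mul_of_nonneg_left (trace_pow_le hM k) (dot_self_nonneg u)

lemma gterm_nonneg {θ : ℝ} (hθ : 0 ≤ θ) {M : Matrix ι ι ℝ} (hM : M.PosSemidef)
    (u : ι → ℝ) (k : ℕ) : 0 ≤ θ^k * (u ⬝ᵥ M^k *ᵥ u) / (k.factorial : ℝ) :=
  div_nonneg (mul_nonneg (pow_nonneg hθ _) (psd_quad_nonneg (hM.pow _) u)) (Nat.cast_nonneg _)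

lemma summable_g {θ : ℝ} (hθ : 0 ≤ θ) {M : Matrix ι ι ℝ} (hM : M.PosSemidef) (u : ι → ℝ) :
    Summable (fun k : ℕ => θ^k * (u ⬝ᵥ M^k *ᵥ u) / (k.factorial : ℝ)) := by
  refine Summable.of_nonneg_of_le (fun k => gterm_nonneg hθ hM u k) (fun k => ?_)
    (((Real.summable_pow_div_factorial (θ * M.trace)).mul_left (u ⬝ᵥ u)))
  have h1 : θ^k * (u ⬝ᵥ M^k *ᵥ u) ≤ θ^k * ((u ⬝ᵥ u) * M.trace^k) :=
    mul_le_mul_of_nonneg_left (quad_pow_le hM u k) (pow_nonneg hθ _)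
  calc θ^k * (u ⬝ᵥ M^k *ᵥ u) / (k.factorial : ℝ)
      ≤ θ^k * ((u ⬝ᵥ u) * M.trace^k) / (k.factorial : ℝ) :=
        div_le_div_of_nonneg_right h1 (by positivity)
  _ = (u ⬝ᵥ u) * ((θ * M.trace)^k / (k.factorial : ℝ)) := by
        rw [mul_pow]; ring

lemma gamma_term_nonneg {θ s : ℝ} (hθ : 0 ≤ θ) (hs : 0 ≤ s) (j : ℕ) :
    0 ≤ θ^(j+1) * s^j / ((j+1).factorial : ℝ) :=
  div_nonneg (mul_nonneg (pow_nonneg hθ _) (pow_nonneg hs _)) (Nat.cast_nonneg _)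

lemma summable_gamma {θ s : ℝ} (hθ : 0 ≤ θ) (hs : 0 ≤ s) :
    Summable (fun j : ℕ => θ^(j+1) * s^j / ((j+1).factorial : ℝ)) := by
  refine Summable.of_nonneg_of_le (fun j => gamma_term_nonneg hθ hs j) (fun j => ?_)
    (((Real.summable_pow_div_factorial (θ * s)).mul_left θ))
  have h1 : (θ * s)^j / (j.factorial : ℝ) ≥ (θ*s)^j / ((j+1).factorial : ℝ) := by
    apply div_le_div_of_nonneg_left (pow_nonneg (mul_nonneg hθ hs) j) (by positivity)
    exact_mod_cast Nat.factorial_le (by omega)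
  calc θ^(j+1) * s^j / ((j+1).factorial : ℝ)
      = θ * ((θ*s)^j / ((j+1).factorial : ℝ)) := by rw [mul_pow, pow_succ]; ring
  _ ≤ θ * ((θ*s)^j / (j.factorial : ℝ)) := mul_le_mul_of_nonneg_left h1 hθ

lemma exp_tsum (x : ℝ) : Real.exp x = ∑' k : ℕ, x^k / (k.factorial : ℝ) := by
  rw [Real.exp_eq_exp_ℝ, NormedSpace.exp_eq_tsum_div]

lemma exp_tail (x : ℝ) : ∑' k : ℕ, x^(k+1)/((k+1).factorial : ℝ) = Real.exp x - 1 := by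
  have hs := Real.summable_pow_div_factorial x
  have h := Summable.tsum_eq_zero_add hs
  rw [exp_tsum x, h]
  simp

lemma Gstep {θ : ℝ} (hθ : 0 ≤ θ) (s0 : ℝ) {H : Matrix ι ι ℝ} (hH : H.PosSemidef)
    (ζ : ι → ℝ) :
    Gexp θ s0 (H + vecMulVec ζ ζ) ≤ Gexp θ s0 H + gammaS θ (ζ ⬝ᵥ ζ) * gquad θ H ζ := by
  set s : ℝ := ζ ⬝ᵥ ζ with hs
  have hsnn : 0 ≤ s := dot_self_nonneg ζ
  set a : ℕ → ℝ := fun j => θ^(j+1) * s^j / ((j+1).factorial : ℝ) with ha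
  set B : ℕ → ℝ := fun b => θ^b * (ζ ⬝ᵥ H^b *ᵥ ζ) / (b.factorial : ℝ) with hB
  have hXpsd : (vecMulVec ζ ζ).PosSemidef := by
    have := psd_weighted (Finset.univ : Finset (Fin 1)) (fun _ => (1:ℝ)) (fun _ => ζ)
      (fun _ _ => zero_le_one)
    simpa using this
  have hHX : (H + vecMulVec ζ ζ).PosSemidef := hH.add hXpsd
  have hsummA : Summable (fun j => ‖a j‖) := by
    refine Summable.congr (summable_gamma hθ hsnn) fun j => ?_
    rw [Real.norm_eq_abs, abs_of_nonneg (gamma_term_nonneg hθ hsnn j)]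
  have hsummB : Summable (fun b => ‖B b‖) := by
    refine Summable.congr (summable_g hθ hH ζ) fun b => ?_
    rw [Real.norm_eq_abs, abs_of_nonneg (gterm_nonneg hθ hH ζ b)]
  have hcauchy : gammaS θ s * gquad θ H ζ
      = ∑' k : ℕ, ∑ kl ∈ Finset.HasAntidiagonal.antidiagonal k, a kl.1 * B kl.2 :=
    tsum_mul_tsum_eq_tsum_sum_antidiagonal_of_summable_norm hsummA hsummB
  have hsummAD : Summable (fun k => ∑ kl ∈ Finset.HasAntidiagonal.antidiagonal k, a kl.1 * B kl.2) := by
    have h := summable_norm_sum_mul_antidiagonal_of_summable_norm hsummA hsummB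
    refine Summable.congr h fun k => ?_
    rw [Real.norm_eq_abs, abs_of_nonneg]
    refine Finset.sum_nonneg fun kl _ => mul_nonneg ?_ ?_
    · exact gamma_term_nonneg hθ hsnn _
    · exact gterm_nonneg hθ hH ζ _
  have hADeq : ∀ k : ℕ, ∑ kl ∈ Finset.HasAntidiagonal.antidiagonal k, a kl.1 * B kl.2
      = θ^(k+1) / ((k+1).factorial : ℝ) * ∑ j ∈ Finset.range (k+1),
          (((k+1).choose (j+1) : ℝ)) * s ^ j * (ζ ⬝ᵥ H ^ (k - j) *ᵥ ζ) := by
    intro k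
    rw [Finset.Nat.sum_antidiagonal_eq_sum_range_succ_mk, Finset.mul_sum]
    refine Finset.sum_congr rfl fun j hj => ?_
    have hjk : j ≤ k := by have := Finset.mem_range.1 hj; omega
    rw [ha, hB]
    simp only []
    have hfac : ((k+1).choose (j+1) : ℝ) * ((j+1).factorial : ℝ) * ((k-j).factorial : ℝ)
        = ((k+1).factorial : ℝ) := by
      have h := Nat.choose_mul_factorial_mul_factorial (show j+1 ≤ k+1 by omega)
      have h2 : k + 1 - (j+1) = k - j := by omega
      rw [h2] at h
      exact_mod_cast congrArg (Nat.cast : ℕ → ℝ) h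
    have hpow : θ^(j+1) * θ^(k-j) = θ^(k+1) := by
      rw [← pow_add]
      congr 1
      omega
    have hpow2 : θ^k = θ^j * θ^(k-j) := by
      rw [← pow_add]
      congr 1
      omega
    field_simp
    rw [← hfac]
    ring_nf
    rw [hpow2]
    ring
  have hterm : ∀ k : ℕ, θ^(k+1) * ((H + vecMulVec ζ ζ)^(k+1)).trace / ((k+1).factorial : ℝ)
      ≤ θ^(k+1) * (H^(k+1)).trace / ((k+1).factorial : ℝ)
        + ∑ kl ∈ Finset.HasAntidiagonal.antidiagonal k, a kl.1 * B kl.2 := by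
    intro k
    rw [hADeq k]
    have hcore := core_trace hH ζ k
    have hc : θ^(k+1) / ((k+1).factorial : ℝ) ≥ 0 := by positivity
    calc θ^(k+1) * ((H + vecMulVec ζ ζ)^(k+1)).trace / ((k+1).factorial : ℝ)
        = θ^(k+1) / ((k+1).factorial : ℝ) * ((H + vecMulVec ζ ζ)^(k+1)).trace := by ring
    _ ≤ θ^(k+1) / ((k+1).factorial : ℝ) * ((H^(k+1)).trace + ∑ j ∈ Finset.range (k+1),
          (((k+1).choose (j+1) : ℝ)) * s ^ j * (ζ ⬝ᵥ H ^ (k - j) *ᵥ ζ)) :=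
        mul_le_mul_of_nonneg_left hcore hc
    _ = θ^(k+1) * (H^(k+1)).trace / ((k+1).factorial : ℝ)
        + θ^(k+1) / ((k+1).factorial : ℝ) * ∑ j ∈ Finset.range (k+1),
          (((k+1).choose (j+1) : ℝ)) * s ^ j * (ζ ⬝ᵥ H ^ (k - j) *ᵥ ζ) := by ring
  have hmain : ∑' k : ℕ, θ^(k+1) * ((H + vecMulVec ζ ζ)^(k+1)).trace / ((k+1).factorial : ℝ)
      ≤ ∑' k : ℕ, (θ^(k+1) * (H^(k+1)).trace / ((k+1).factorial : ℝ)
        + ∑ kl ∈ Finset.HasAntidiagonal.antidiagonal k, a kl.1 * B kl.2) :=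
    Summable.tsum_le_tsum hterm (summable_G hθ hHX) ((summable_G hθ hH).add hsummAD)
  rw [Summable.tsum_add (summable_G hθ hH) hsummAD] at hmain
  rw [Gexp, Gexp, hcauchy]
  linarith [hmain]

lemma quad_weighted {κ : Type*} (s : Finset κ) (p : κ → ℝ) (g : κ → ι → ℝ) (y : ι → ℝ) :
    y ⬝ᵥ (∑ x ∈ s, p x • vecMulVec (g x) (g x)) *ᵥ y
      = ∑ x ∈ s, p x * ((g x ⬝ᵥ y) * (g x ⬝ᵥ y)) := by
  rw [sum_mulVec', dot_sum]
  refine Finset.sum_congr rfl fun x _ => ?_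
  rw [Matrix.smul_mulVec, dotProduct_smul, smul_eq_mul, quad_vmv]

lemma psd_sum_vmv {κ : Type*} (s : Finset κ) (g : κ → ι → ℝ) :
    (∑ x ∈ s, vecMulVec (g x) (g x)).PosSemidef := by
  have h := psd_weighted s (fun _ => (1:ℝ)) g (fun _ _ => zero_le_one)
  simpa using h

lemma Gexp_nonneg {θ s0 : ℝ} (hθ : 0 ≤ θ) (hs0 : 0 ≤ s0) {M : Matrix ι ι ℝ}
    (hM : M.PosSemidef) : 0 ≤ Gexp θ s0 M :=
  add_nonneg hs0 (tsum_nonneg fun k => Gterm_nonneg hθ hM k)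

lemma Gexp_zero (θ s0 : ℝ) : Gexp θ s0 (0 : Matrix ι ι ℝ) = s0 := by
  rw [Gexp]
  have : ∀ k : ℕ, θ^(k+1) * ((0 : Matrix ι ι ℝ)^(k+1)).trace / ((k+1).factorial : ℝ) = 0 := by
    intro k
    rw [zero_pow (Nat.succ_ne_zero k)]
    simp
  rw [tsum_congr this]
  simp

lemma gammaS_nonneg {θ s : ℝ} (hθ : 0 ≤ θ) (hs : 0 ≤ s) : 0 ≤ gammaS θ s :=
  tsum_nonneg fun j => gamma_term_nonneg hθ hs j

lemma Estep {κ : Type*} [Fintype κ] (p : κ → ℝ) (hp : ∀ x, 0 ≤ p x)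
    (hp1 : ∑ x, p x = 1) (ζm : κ → ι → ℝ) (s0 : ℝ) (hs0 : ∀ x, ζm x ⬝ᵥ ζm x = s0)
    (Dmax : ℝ) (hD1 : 1 ≤ Dmax)
    (hA : ∀ y : ι → ℝ, (∑ x, p x * ((ζm x ⬝ᵥ y) * (ζm x ⬝ᵥ y))) ≤ Dmax * (y ⬝ᵥ y))
    {θ : ℝ} (hθ : 0 ≤ θ) {H : Matrix ι ι ℝ} (hH : H.PosSemidef) :
    ∑ x, p x * gquad θ H (ζm x) ≤ Dmax * Gexp θ s0 H := by
  classical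
  set A : Matrix ι ι ℝ := ∑ x, p x • vecMulVec (ζm x) (ζm x) with hAdef
  have hAq : ∀ y, y ⬝ᵥ A *ᵥ y ≤ Dmax * (y ⬝ᵥ y) := by
    intro y
    rw [hAdef, quad_weighted]
    exact hA y
  have hexp : ∀ b : ℕ, ∑ x, p x * (ζm x ⬝ᵥ H^b *ᵥ ζm x) = (H^b * A).trace := by
    intro b
    rw [hAdef, Finset.mul_sum, Matrix.trace_sum]
    refine Finset.sum_congr rfl fun x _ => ?_
    rw [mul_smul_comm, Matrix.trace_smul, Matrix.trace_mul_comm, trace_vmv_mul]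
    simp [smul_eq_mul]
  have htr : ∀ k : ℕ, (H^(k+1) * A).trace ≤ Dmax * (H^(k+1)).trace :=
    fun k => trace_mul_le (hH.pow _) Dmax hAq
  have hswap : ∑ x, p x * gquad θ H (ζm x)
      = ∑' k : ℕ, ∑ x, p x * (θ^k * (ζm x ⬝ᵥ H^k *ᵥ ζm x) / (k.factorial : ℝ)) := by
    calc ∑ x, p x * gquad θ H (ζm x)
        = ∑ x, ∑' k : ℕ, p x * (θ^k * (ζm x ⬝ᵥ H^k *ᵥ ζm x) / (k.factorial : ℝ)) := by
          refine Finset.sum_congr rfl fun x _ => ?_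
          rw [gquad, ← tsum_mul_left]
    _ = ∑' k : ℕ, ∑ x, p x * (θ^k * (ζm x ⬝ᵥ H^k *ᵥ ζm x) / (k.factorial : ℝ)) :=
          (Summable.tsum_finsetSum fun x _ => (summable_g hθ hH (ζm x)).mul_left (p x)).symm
  set F : ℕ → ℝ := fun k => ∑ x, p x * (θ^k * (ζm x ⬝ᵥ H^k *ᵥ ζm x) / (k.factorial : ℝ))
    with hF
  have hFsummable : Summable F := by
    rw [hF]
    exact summable_sum fun x _ => (summable_g hθ hH (ζm x)).mul_left (p x)
  have hnk : Nonempty κ := by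
    by_contra h
    rw [not_nonempty_iff] at h
    rw [Finset.univ_eq_empty, Finset.sum_empty] at hp1
    norm_num at hp1
  have hs0nn : 0 ≤ s0 := by
    obtain ⟨x0⟩ := hnk
    rw [← hs0 x0]
    exact dot_self_nonneg _
  have hF0 : F 0 = s0 := by
    have he : ∀ x ∈ Finset.univ,
        p x * (θ^0 * ((ζm x) ⬝ᵥ H^0 *ᵥ (ζm x)) / ((Nat.factorial 0 : ℕ) : ℝ)) = p x * s0 := by
      intro x _
      rw [pow_zero, pow_zero, Matrix.one_mulVec, hs0 x]
      norm_num
    calc F 0 = ∑ x, p x * (θ^0 * ((ζm x) ⬝ᵥ H^0 *ᵥ (ζm x)) / ((Nat.factorial 0 : ℕ) : ℝ)) := rfl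
    _ = ∑ x, p x * s0 := Finset.sum_congr rfl he
    _ = s0 := by rw [← Finset.sum_mul, hp1, one_mul]
  have hFsucc : ∀ k : ℕ,
      F (k+1) ≤ Dmax * (θ^(k+1) * (H^(k+1)).trace / ((k+1).factorial : ℝ)) := by
    intro k
    have he : ∑ x, p x * (θ^(k+1) * (ζm x ⬝ᵥ H^(k+1) *ᵥ ζm x) / ((k+1).factorial : ℝ))
        = θ^(k+1)/((k+1).factorial : ℝ) * ∑ x, p x * (ζm x ⬝ᵥ H^(k+1) *ᵥ ζm x) := by
      rw [Finset.mul_sum]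
      refine Finset.sum_congr rfl fun x _ => by ring
    have hFs : F (k+1) = ∑ x, p x * (θ^(k+1) * (ζm x ⬝ᵥ H^(k+1) *ᵥ ζm x) / ((k+1).factorial : ℝ)) := rfl
    rw [hFs, he, hexp (k+1)]
    calc θ^(k+1)/((k+1).factorial : ℝ) * (H^(k+1) * A).trace
        ≤ θ^(k+1)/((k+1).factorial : ℝ) * (Dmax * (H^(k+1)).trace) :=
          mul_le_mul_of_nonneg_left (htr k) (by positivity)
    _ = Dmax * (θ^(k+1) * (H^(k+1)).trace / ((k+1).factorial : ℝ)) := by ring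
  rw [hswap, Summable.tsum_eq_zero_add hFsummable]
  have htail : ∑' k : ℕ, F (k+1)
      ≤ ∑' k : ℕ, Dmax * (θ^(k+1) * (H^(k+1)).trace / ((k+1).factorial : ℝ)) :=
    Summable.tsum_le_tsum hFsucc (hFsummable.comp_injective Nat.succ_injective)
      ((summable_G hθ hH).mul_left Dmax)
  rw [tsum_mul_left] at htail
  have hG : Dmax * Gexp θ s0 H
      = Dmax * s0 + Dmax * ∑' k : ℕ, (θ^(k+1) * (H^(k+1)).trace / ((k+1).factorial : ℝ)) := by
    rw [Gexp]
    ring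
  rw [hG, hF0]
  have hs0D : s0 ≤ Dmax * s0 := by nlinarith
  linarith

lemma EG {κ : Type*} [Fintype κ] (p : κ → ℝ) (hp : ∀ x, 0 ≤ p x)
    (hp1 : ∑ x, p x = 1) (ζm : κ → ι → ℝ) (s0 : ℝ) (hs0 : ∀ x, ζm x ⬝ᵥ ζm x = s0)
    (Dmax : ℝ) (hD1 : 1 ≤ Dmax)
    (hA : ∀ y : ι → ℝ, (∑ x, p x * ((ζm x ⬝ᵥ y) * (ζm x ⬝ᵥ y))) ≤ Dmax * (y ⬝ᵥ y))
    {θ : ℝ} (hθ : 0 ≤ θ) : ∀ m : ℕ,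
    ∑ D : Fin m → κ, (∏ l, p (D l)) *
        Gexp θ s0 (∑ l, vecMulVec (ζm (D l)) (ζm (D l)))
      ≤ s0 * (1 + gammaS θ s0 * Dmax) ^ m := by
  classical
  have hnk : Nonempty κ := by
    by_contra h
    rw [not_nonempty_iff] at h
    rw [Finset.univ_eq_empty, Finset.sum_empty] at hp1
    norm_num at hp1
  have hs0nn : 0 ≤ s0 := by
    obtain ⟨x0⟩ := hnk
    rw [← hs0 x0]
    exact dot_self_nonneg _
  have hγnn : 0 ≤ gammaS θ s0 := gammaS_nonneg hθ hs0nn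
  have hfac : 0 ≤ 1 + gammaS θ s0 * Dmax := by nlinarith
  intro m
  induction m with
  | zero =>
    have huniq : ∀ D : Fin 0 → κ, (∏ l, p (D l)) *
        Gexp θ s0 (∑ l, vecMulVec (ζm (D l)) (ζm (D l))) = s0 := by
      intro D
      rw [Finset.univ_eq_empty, Finset.prod_empty, Finset.sum_empty, Gexp_zero, one_mul]
    rw [Finset.sum_congr rfl fun D _ => huniq D]
    simp
  | succ m ih =>
    have hsplit : ∑ D : Fin (m+1) → κ, (∏ l, p (D l)) *
        Gexp θ s0 (∑ l, vecMulVec (ζm (D l)) (ζm (D l)))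
      = ∑ D : Fin m → κ, ∑ x : κ, (p x * ∏ l, p (D l)) *
          Gexp θ s0 ((∑ l, vecMulVec (ζm (D l)) (ζm (D l))) + vecMulVec (ζm x) (ζm x)) := by
      rw [← Equiv.sum_comp (Fin.consEquiv (fun _ => κ)) (fun D => (∏ l, p (D l)) *
        Gexp θ s0 (∑ l, vecMulVec (ζm (D l)) (ζm (D l))))]
      rw [Fintype.sum_prod_type]
      rw [Finset.sum_comm]
      refine Finset.sum_congr rfl fun D _ => Finset.sum_congr rfl fun x _ => ?_
      have h1 : ∏ l : Fin (m+1), p ((Fin.consEquiv (fun _ => κ)) (x, D) l)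
          = p x * ∏ l : Fin m, p (D l) := by
        rw [Fin.prod_univ_succ]
        simp [Fin.consEquiv]
      have h2 : ∑ l : Fin (m+1), vecMulVec (ζm ((Fin.consEquiv (fun _ => κ)) (x, D) l))
            (ζm ((Fin.consEquiv (fun _ => κ)) (x, D) l))
          = (∑ l : Fin m, vecMulVec (ζm (D l)) (ζm (D l))) + vecMulVec (ζm x) (ζm x) := by
        rw [Fin.sum_univ_succ]
        simp only [Fin.consEquiv, Equiv.coe_fn_mk, Fin.cons_zero, Fin.cons_succ]
        rw [add_comm]
      rw [h1, h2]
    rw [hsplit]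
    have hinner : ∀ D : Fin m → κ, ∑ x : κ, (p x * ∏ l, p (D l)) *
        Gexp θ s0 ((∑ l, vecMulVec (ζm (D l)) (ζm (D l))) + vecMulVec (ζm x) (ζm x))
      ≤ (∏ l, p (D l)) * ((1 + gammaS θ s0 * Dmax) *
          Gexp θ s0 (∑ l, vecMulVec (ζm (D l)) (ζm (D l)))) := by
      intro D
      set N : Matrix ι ι ℝ := ∑ l, vecMulVec (ζm (D l)) (ζm (D l)) with hN
      have hNpsd : N.PosSemidef := psd_sum_vmv _ _
      have hPnn : 0 ≤ ∏ l, p (D l) := Finset.prod_nonneg fun l _ => hp _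
      have hstep : ∀ x : κ, Gexp θ s0 (N + vecMulVec (ζm x) (ζm x))
          ≤ Gexp θ s0 N + gammaS θ s0 * gquad θ N (ζm x) := by
        intro x
        have h := Gstep hθ s0 hNpsd (ζm x)
        rwa [hs0 x] at h
      calc ∑ x : κ, (p x * ∏ l, p (D l)) *
          Gexp θ s0 (N + vecMulVec (ζm x) (ζm x))
          ≤ ∑ x : κ, (p x * ∏ l, p (D l)) *
            (Gexp θ s0 N + gammaS θ s0 * gquad θ N (ζm x)) := by
            refine Finset.sum_le_sum fun x _ => ?_
            exact mul_le_mul_of_nonneg_left (hstep x) (mul_nonneg (hp x) hPnn)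
      _ = (∑ x, p x * ((∏ l, p (D l)) * Gexp θ s0 N))
            + ∑ x, ((∏ l, p (D l)) * gammaS θ s0) * (p x * gquad θ N (ζm x)) := by
            rw [← Finset.sum_add_distrib]
            refine Finset.sum_congr rfl fun x _ => by ring
      _ = (∑ x, p x) * ((∏ l, p (D l)) * Gexp θ s0 N)
            + ((∏ l, p (D l)) * gammaS θ s0) * ∑ x, p x * gquad θ N (ζm x) := by
            rw [← Finset.sum_mul, ← Finset.mul_sum]
      _ = (∏ l, p (D l)) * ((∑ x, p x) * Gexp θ s0 N
            + gammaS θ s0 * ∑ x, p x * gquad θ N (ζm x)) := by ring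
      _ ≤ (∏ l, p (D l)) * ((1 + gammaS θ s0 * Dmax) * Gexp θ s0 N) := by
            refine mul_le_mul_of_nonneg_left ?_ hPnn
            rw [hp1, one_mul]
            have hE := Estep p hp hp1 ζm s0 hs0 Dmax hD1 hA hθ hNpsd
            have hgq : gammaS θ s0 * (∑ x, p x * gquad θ N (ζm x))
                ≤ gammaS θ s0 * (Dmax * Gexp θ s0 N) :=
              mul_le_mul_of_nonneg_left hE hγnn
            nlinarith [hgq]
    calc ∑ D : Fin m → κ, ∑ x : κ, (p x * ∏ l, p (D l)) *
        Gexp θ s0 ((∑ l, vecMulVec (ζm (D l)) (ζm (D l))) + vecMulVec (ζm x) (ζm x))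
        ≤ ∑ D : Fin m → κ, (∏ l, p (D l)) * ((1 + gammaS θ s0 * Dmax) *
            Gexp θ s0 (∑ l, vecMulVec (ζm (D l)) (ζm (D l)))) :=
          Finset.sum_le_sum fun D _ => hinner D
    _ = (1 + gammaS θ s0 * Dmax) * ∑ D : Fin m → κ, (∏ l, p (D l)) *
            Gexp θ s0 (∑ l, vecMulVec (ζm (D l)) (ζm (D l))) := by
          rw [Finset.mul_sum]
          refine Finset.sum_congr rfl fun D _ => by ring
    _ ≤ (1 + gammaS θ s0 * Dmax) * (s0 * (1 + gammaS θ s0 * Dmax) ^ m) :=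
          mul_le_mul_of_nonneg_left ih hfac
    _ = s0 * (1 + gammaS θ s0 * Dmax) ^ (m+1) := by ring

lemma G_lower {N : Matrix ι ι ℝ} (hN : N.PosSemidef) {θ s0 t : ℝ} (hθ : 0 ≤ θ)
    (hs0 : 1 ≤ s0) (ht : 0 ≤ t)
    (hray : ∃ y : ι → ℝ, y ⬝ᵥ y ≠ 0 ∧ t * (y ⬝ᵥ y) ≤ y ⬝ᵥ N *ᵥ y) :
    Real.exp (θ * t) ≤ Gexp θ s0 N := by
  obtain ⟨y, hy0, hy⟩ := hray
  have hypos : 0 < y ⬝ᵥ y := lt_of_le_of_ne (dot_self_nonneg y) (Ne.symm hy0)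
  have hpow : ∀ k : ℕ, t^(k+1) ≤ (N^(k+1)).trace := by
    intro k
    have h1 : (t * (y ⬝ᵥ y))^(k+1) ≤ (y ⬝ᵥ N *ᵥ y)^(k+1) :=
      pow_le_pow_left₀ (mul_nonneg ht (dot_self_nonneg y)) hy _
    have h2 := rayleigh_pow hN y k
    have h3 : y ⬝ᵥ N^(k+1) *ᵥ y ≤ (y ⬝ᵥ y) * (N^(k+1)).trace := quad_le_trace (hN.pow _) y
    have h4 : (y ⬝ᵥ y)^k * (y ⬝ᵥ N^(k+1) *ᵥ y) ≤ (y ⬝ᵥ y)^(k+1) * (N^(k+1)).trace := by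
      calc (y ⬝ᵥ y)^k * (y ⬝ᵥ N^(k+1) *ᵥ y)
          ≤ (y ⬝ᵥ y)^k * ((y ⬝ᵥ y) * (N^(k+1)).trace) :=
            mul_le_mul_of_nonneg_left h3 (pow_nonneg (dot_self_nonneg y) k)
      _ = (y ⬝ᵥ y)^(k+1) * (N^(k+1)).trace := by ring
    have h5 : t^(k+1) * (y ⬝ᵥ y)^(k+1) ≤ (N^(k+1)).trace * (y ⬝ᵥ y)^(k+1) := by
      calc t^(k+1) * (y ⬝ᵥ y)^(k+1) = (t * (y ⬝ᵥ y))^(k+1) := by rw [mul_pow]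
      _ ≤ (y ⬝ᵥ N *ᵥ y)^(k+1) := h1
      _ ≤ (y ⬝ᵥ y)^k * (y ⬝ᵥ N^(k+1) *ᵥ y) := h2
      _ ≤ (y ⬝ᵥ y)^(k+1) * (N^(k+1)).trace := h4
      _ = (N^(k+1)).trace * (y ⬝ᵥ y)^(k+1) := by ring
    exact le_of_mul_le_mul_right h5 (pow_pos hypos (k+1))
  have hterm : ∀ k : ℕ, (θ*t)^(k+1)/((k+1).factorial : ℝ)
      ≤ θ^(k+1) * (N^(k+1)).trace / ((k+1).factorial : ℝ) := by
    intro k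
    rw [mul_pow]
    refine div_le_div_of_nonneg_right ?_ (by positivity)
    exact mul_le_mul_of_nonneg_left (hpow k) (pow_nonneg hθ _)
  have htsum : ∑' k : ℕ, (θ*t)^(k+1)/((k+1).factorial : ℝ)
      ≤ ∑' k : ℕ, θ^(k+1) * (N^(k+1)).trace / ((k+1).factorial : ℝ) :=
    Summable.tsum_le_tsum hterm (summable_shift (θ*t)) (summable_G hθ hN)
  rw [exp_tail (θ*t)] at htsum
  rw [Gexp]
  linarith

end ScatterAux
end



section ConcreteGlue
open ScatterAux

lemma sgn_mul_self (a : Bool) : sgn a * sgn a = 1 := by cases a <;> norm_num [sgn]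

lemma zvec_sq {n : ℕ} (i : Fin n) (x : Fin n → Bool) (j : Fin n) :
    zvec i x j * zvec i x j = 1 := by
  unfold zvec
  by_cases h : j = i
  · simp only [h, if_pos rfl]
    exact sgn_mul_self _
  · simp only [if_neg h]
    cases hx : x i <;> cases hy : x j <;> norm_num [sgn]

end ConcreteGlue

open ScatterAux

/-- if `λ_max(E_{x∼p}[z_S z_Sᵀ]) ≤ D_max`, then
`λ_max((1/m)·∑_l z⁽ˡ⁾_S (z⁽ˡ⁾_S)ᵀ) < 2·D_max` with probability at least
`1 - |S|·exp(-m(1-ν)/(4|S|))` over the i.i.d. draw of the `m` samples from `p`. -/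
theorem sample_scatter_max_eig
    (n m : ℕ) (W : Matrix (Fin n) (Fin n) ℝ) (b : Fin n → ℝ)
    (hdiag : ∀ i, W i i = 0) (q : ℝ)
    (hNE1 : 1 ≤ (NEset W b).card) (hNE2 : (NEset W b).card < 2 ^ n)
    (hq1 : ((NEset W b).card : ℝ) / (2 : ℝ) ^ n < q) (hq2 : q < 1)
    (i : Fin n) (Dmax : ℝ)
    (hScat : maxEigSubLE (popScatter q (NEset W b) i) (supp (vvec W b i)) Dmax) :
    1 - ((supp (vvec W b i)).card : ℝ) *
          Real.exp (-((m : ℝ) * (1 - mixCoef n q (NEset W b).card)) /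
            (4 * ((supp (vvec W b i)).card : ℝ))) ≤
      iidProb (pObs q (NEset W b)) m
        {D | maxEigSubLT (sampleScatter i D) (supp (vvec W b i)) (2 * Dmax)} := by
  classical
  set NE := NEset W b with hNEdef
  set S := supp (vvec W b i) with hSdef
  set p : (Fin n → Bool) → ℝ := pObs q NE with hpdef
  have h2n : ((2^n : ℕ) : ℝ) = (2:ℝ)^n := by push_cast; ring
  have hcard_lt : ((NE.card : ℝ)) < (2:ℝ)^n := by
    rw [← h2n]; exact_mod_cast hNE2
  have hcard_pos : (0:ℝ) < NE.card := by exact_mod_cast hNE1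
  have h2npos : (0:ℝ) < (2:ℝ)^n := by positivity
  have hq0 : 0 < q :=
    lt_of_le_of_lt (div_nonneg (le_of_lt hcard_pos) (le_of_lt h2npos)) hq1
  have hp_nonneg : ∀ x, 0 ≤ p x := by
    intro x
    rw [hpdef]
    unfold pObs
    split
    · positivity
    · have hden : (0:ℝ) < (2:ℝ)^n - NE.card := by linarith
      have : (0:ℝ) < 1 - q := by linarith
      positivity
  have hp_sum : ∑ x, p x = 1 := by
    have hsum : ∑ x : Fin n → Bool, p x
        = ∑ x ∈ Finset.univ.filter (· ∈ NE), (q / (NE.card : ℝ))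
          + ∑ x ∈ Finset.univ.filter (¬ · ∈ NE), ((1 - q) / ((2:ℝ)^n - (NE.card : ℝ))) := by
      rw [← Finset.sum_ite (f := fun _ => q / (NE.card : ℝ))
        (g := fun _ => (1 - q) / ((2:ℝ)^n - (NE.card : ℝ)))]
      rfl
    rw [hsum]
    rw [Finset.sum_const, Finset.sum_const]
    have hf1 : Finset.univ.filter (· ∈ NE) = NE := Finset.filter_univ_mem NE
    have hf2 : (Finset.univ.filter (¬ · ∈ NE)).card = 2^n - NE.card := by
      rw [Finset.filter_not, Finset.card_sdiff_of_subset (Finset.filter_subset _ _)]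
      rw [hf1, Finset.card_univ]
      congr 1
      rw [Fintype.card_fun]
      simp
    rw [hf1, hf2]
    have hcnz : (NE.card : ℝ) ≠ 0 := ne_of_gt hcard_pos
    have hc2 : ((2^n - NE.card : ℕ) : ℝ) = (2:ℝ)^n - (NE.card : ℝ) := by
      rw [Nat.cast_sub (le_of_lt hNE2), h2n]
    rw [nsmul_eq_mul, nsmul_eq_mul, hc2]
    have hdnz : (2:ℝ)^n - (NE.card : ℝ) ≠ 0 := by
      intro h; linarith
    field_simp
    ring
  have hν0 : 0 ≤ mixCoef n q NE.card := by
    unfold mixCoef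
    have hnum : 0 ≤ q - (NE.card : ℝ) / (2:ℝ)^n := by linarith
    have hden : 0 ≤ 1 - (NE.card : ℝ) / (2:ℝ)^n := by
      have : (NE.card : ℝ) / (2:ℝ)^n < 1 := (div_lt_one h2npos).mpr hcard_lt
      linarith
    exact div_nonneg hnum hden
  have hprod1 : ∑ D : Fin m → (Fin n → Bool), ∏ l, p (D l) = 1 := by
    have h := Finset.prod_univ_sum (fun _ : Fin m => (Finset.univ : Finset (Fin n → Bool)))
      (fun _ x => p x)
    rw [Fintype.piFinset_univ] at h
    rw [← h, hp_sum]
    simp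
  set E : Set (Fin m → (Fin n → Bool)) :=
    {D | maxEigSubLT (sampleScatter i D) S (2 * Dmax)} with hEdef
  have hsplitEC : iidProb p m E = 1 - iidProb p m Eᶜ := by
    have hcompl : iidProb p m E + iidProb p m Eᶜ = 1 := by
      rw [iidProb, iidProb, ← Finset.sum_add_distrib, ← hprod1]
      refine Finset.sum_congr rfl fun D _ => ?_
      by_cases hD : D ∈ E
      · rw [Set.indicator_of_mem hD, Set.indicator_of_notMem (by simpa using hD), add_zero]
      · rw [Set.indicator_of_notMem hD, Set.indicator_of_mem (by simpa using hD), zero_add]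
    linarith
  by_cases hS0 : S.card = 0
  · have hSempty : S = ∅ := Finset.card_eq_zero.mp hS0
    have hEall : ∀ D : Fin m → (Fin n → Bool), D ∈ E := by
      intro D
      intro y hsupp hyne
      exact absurd (funext fun j => hsupp j (by simp [hSempty])) hyne
    have hE1 : iidProb p m E = 1 := by
      rw [iidProb, ← hprod1]
      exact Finset.sum_congr rfl fun D _ => Set.indicator_of_mem (hEall D) _
    rw [hE1, hS0]
    norm_num
  · have hs1 : 1 ≤ S.card := Nat.one_le_iff_ne_zero.mpr hS0
    have hsR1 : (1:ℝ) ≤ (S.card : ℝ) := by exact_mod_cast hs1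
    have hsRpos : (0:ℝ) < (S.card : ℝ) := by linarith
    set ζm : (Fin n → Bool) → (Fin n → ℝ) :=
      fun x j => if j ∈ S then zvec i x j else 0 with hζdef
    have hζsq : ∀ x, ζm x ⬝ᵥ ζm x = (S.card : ℝ) := by
      intro x
      have h1 : ζm x ⬝ᵥ ζm x = ∑ j, if j ∈ S then (1:ℝ) else 0 := by
        refine Finset.sum_congr rfl fun j _ => ?_
        by_cases hj : j ∈ S
        · simp only [hζdef, if_pos hj]
          exact zvec_sq i x j
        · simp [hζdef, hj]
      rw [h1, Finset.sum_boole, Finset.filter_univ_mem]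
    have hdot_supp : ∀ (x : Fin n → Bool) (y : Fin n → ℝ), (∀ j ∉ S, y j = 0) →
        zvec i x ⬝ᵥ y = ζm x ⬝ᵥ y := by
      intro x y hy
      refine Finset.sum_congr rfl fun j _ => ?_
      by_cases hj : j ∈ S
      · simp [hζdef, hj]
      · simp [hζdef, hj, hy j hj]
    have hquad_pop : ∀ y : Fin n → ℝ,
        quadForm (popScatter q NE i) y = ∑ x, p x * ((zvec i x ⬝ᵥ y) * (zvec i x ⬝ᵥ y)) := by
      intro y
      rw [quadForm, popScatter]
      exact quad_weighted Finset.univ p (zvec i) y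
    obtain ⟨j0, hj0⟩ := Finset.card_pos.mp (by omega : 0 < S.card)
    have hsingle_sq : ∑ j, ((Pi.single j0 (1:ℝ) : Fin n → ℝ)) j ^ 2 = 1 := by
      have : ∀ j, ((Pi.single j0 (1:ℝ) : Fin n → ℝ)) j ^ 2 = if j = j0 then (1:ℝ) else 0 := by
        intro j
        rw [Pi.single_apply]
        by_cases hj : j = j0 <;> simp [hj]
      rw [Finset.sum_congr rfl fun j _ => this j, Finset.sum_ite_eq']
      simp
    have hD1 : 1 ≤ Dmax := by
      have hsupp : ∀ j ∉ S, ((Pi.single j0 (1:ℝ) : Fin n → ℝ)) j = 0 := by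
        intro j hj
        rw [Pi.single_apply, if_neg]
        intro hjj
        exact hj (hjj ▸ hj0)
      have h := hScat ((Pi.single j0 (1:ℝ) : Fin n → ℝ)) hsupp
      rw [hquad_pop, hsingle_sq, mul_one] at h
      have hLHS : ∑ x, p x * ((zvec i x ⬝ᵥ ((Pi.single j0 (1:ℝ) : Fin n → ℝ))) * (zvec i x ⬝ᵥ ((Pi.single j0 (1:ℝ) : Fin n → ℝ)))) = 1 := by
        have hdz : ∀ x : Fin n → Bool, zvec i x ⬝ᵥ ((Pi.single j0 (1:ℝ) : Fin n → ℝ)) = zvec i x j0 := by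
          intro x
          rw [dotProduct]
          have : ∀ j, zvec i x j * ((Pi.single j0 (1:ℝ) : Fin n → ℝ)) j
              = if j = j0 then zvec i x j else 0 := by
            intro j
            rw [Pi.single_apply]
            by_cases hj : j = j0 <;> simp [hj]
          rw [Finset.sum_congr rfl fun j _ => this j, Finset.sum_ite_eq']
          simp
        have : ∀ x ∈ Finset.univ, p x * ((zvec i x ⬝ᵥ ((Pi.single j0 (1:ℝ) : Fin n → ℝ)))
            * (zvec i x ⬝ᵥ ((Pi.single j0 (1:ℝ) : Fin n → ℝ)))) = p x := by
          intro x _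
          rw [hdz x, zvec_sq, mul_one]
        rw [Finset.sum_congr rfl this, hp_sum]
      rw [hLHS] at h
      exact h
    have hA : ∀ y : Fin n → ℝ,
        (∑ x, p x * ((ζm x ⬝ᵥ y) * (ζm x ⬝ᵥ y))) ≤ Dmax * (y ⬝ᵥ y) := by
      intro y
      set yS : Fin n → ℝ := fun j => if j ∈ S then y j else 0 with hySdef
      have hySsupp : ∀ j ∉ S, yS j = 0 := by
        intro j hj
        simp [hySdef, hj]
      have hdzy : ∀ x : Fin n → Bool, zvec i x ⬝ᵥ yS = ζm x ⬝ᵥ y := by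
        intro x
        refine Finset.sum_congr rfl fun j _ => ?_
        by_cases hj : j ∈ S
        · simp [hySdef, hζdef, hj]
        · simp [hySdef, hζdef, hj]
      have h := hScat yS hySsupp
      rw [hquad_pop] at h
      have h2 : ∑ x, p x * ((ζm x ⬝ᵥ y) * (ζm x ⬝ᵥ y))
          = ∑ x, p x * ((zvec i x ⬝ᵥ yS) * (zvec i x ⬝ᵥ yS)) := by
        refine Finset.sum_congr rfl fun x _ => ?_
        rw [hdzy x]
      have h3 : ∑ j, yS j ^ 2 ≤ y ⬝ᵥ y := by
        rw [dotProduct]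
        refine Finset.sum_le_sum fun j _ => ?_
        by_cases hj : j ∈ S
        · simp only [hySdef, if_pos hj]
          rw [sq]
        · simp only [hySdef, if_neg hj]
          rw [zero_pow two_ne_zero]
          exact mul_self_nonneg _
      have hDnn : (0:ℝ) ≤ Dmax := by linarith
      calc ∑ x, p x * ((ζm x ⬝ᵥ y) * (ζm x ⬝ᵥ y))
          = ∑ x, p x * ((zvec i x ⬝ᵥ yS) * (zvec i x ⬝ᵥ yS)) := h2
      _ ≤ Dmax * ∑ j, yS j ^ 2 := h
      _ ≤ Dmax * (y ⬝ᵥ y) := mul_le_mul_of_nonneg_left h3 hDnn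
    set θ : ℝ := Real.log 2 / (S.card : ℝ) with hθdef
    have hlog2 : (0.6931471803:ℝ) < Real.log 2 := Real.log_two_gt_d9
    have hθpos : 0 < θ := div_pos (by linarith) hsRpos
    have hθnn : 0 ≤ θ := le_of_lt hθpos
    have hγval : gammaS θ (S.card : ℝ) = 1 / (S.card : ℝ) := by
      have hterm : ∀ j : ℕ, θ^(j+1) * ((S.card : ℝ))^j / ((j+1).factorial : ℝ)
          = (1/(S.card : ℝ)) * ((θ * (S.card : ℝ))^(j+1) / ((j+1).factorial : ℝ)) := by
        intro j
        rw [mul_pow]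
        have hfacnz : ((j+1).factorial : ℝ) ≠ 0 := by positivity
        field_simp
        ring
      rw [gammaS, tsum_congr hterm, tsum_mul_left, exp_tail]
      have hθs : θ * (S.card : ℝ) = Real.log 2 := by
        rw [hθdef]
        field_simp
      rw [hθs, Real.exp_log (by norm_num : (0:ℝ) < 2)]
      norm_num
    have hmark : iidProb p m Eᶜ
        ≤ Real.exp (-(θ * (2*Dmax*(m:ℝ))))
          * ((S.card : ℝ) * (1 + gammaS θ (S.card : ℝ) * Dmax)^m) := by
      have hEG := EG p hp_nonneg hp_sum ζm ((S.card : ℝ)) hζsq Dmax hD1 hA hθnn m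
      have hptD : ∀ D : Fin m → (Fin n → Bool), (0:ℝ) ≤ ∏ l, p (D l) :=
        fun D => Finset.prod_nonneg fun l _ => hp_nonneg _
      have hperD : ∀ D : Fin m → (Fin n → Bool),
          Eᶜ.indicator (fun D => ∏ l, p (D l)) D
            ≤ Real.exp (-(θ * (2*Dmax*(m:ℝ)))) * ((∏ l, p (D l)) *
                Gexp θ ((S.card : ℝ)) (∑ l, vecMulVec (ζm (D l)) (ζm (D l)))) := by
        intro D
        set N : Matrix (Fin n) (Fin n) ℝ := ∑ l, vecMulVec (ζm (D l)) (ζm (D l)) with hNdef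
        have hNpsd : N.PosSemidef := psd_sum_vmv _ _
        have hGnn : 0 ≤ Gexp θ ((S.card : ℝ)) N := Gexp_nonneg hθnn (by linarith) hNpsd
        by_cases hD : D ∈ Eᶜ
        · rw [Set.indicator_of_mem hD]
          have hnot : ¬ maxEigSubLT (sampleScatter i D) S (2 * Dmax) := hD
          rw [maxEigSubLT] at hnot
          push_neg at hnot
          obtain ⟨y, hysupp, hyne, hyge⟩ := hnot
          have hyy : y ⬝ᵥ y = ∑ j, y j ^ 2 := by
            rw [dotProduct]
            refine Finset.sum_congr rfl fun j _ => ?_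
            rw [sq]
          have hyy0 : y ⬝ᵥ y ≠ 0 := by
            intro h0
            apply hyne
            funext j
            rw [dotProduct] at h0
            have hnn : ∀ j ∈ Finset.univ, 0 ≤ y j * y j := fun j _ => mul_self_nonneg _
            have := (Finset.sum_eq_zero_iff_of_nonneg hnn).1 h0 j (Finset.mem_univ j)
            exact mul_self_eq_zero.1 this
          have hquadN : quadForm (sampleScatter i D) y = (1/(m:ℝ)) * (y ⬝ᵥ N *ᵥ y) := by
            rw [quadForm, sampleScatter, Matrix.smul_mulVec, dotProduct_smul,
              smul_eq_mul]
            congr 1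
            have h1 : y ⬝ᵥ (∑ l, vecMulVec (zvec i (D l)) (zvec i (D l))) *ᵥ y
                = ∑ l, (zvec i (D l) ⬝ᵥ y) * (zvec i (D l) ⬝ᵥ y) := by
              have := quad_weighted Finset.univ (fun _ : Fin m => (1:ℝ))
                (fun l => zvec i (D l)) y
              simpa using this
            have h2 : y ⬝ᵥ N *ᵥ y = ∑ l, (ζm (D l) ⬝ᵥ y) * (ζm (D l) ⬝ᵥ y) := by
              have := quad_weighted Finset.univ (fun _ : Fin m => (1:ℝ))
                (fun l => ζm (D l)) y
              simpa [hNdef] using this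
            rw [h1, h2]
            refine Finset.sum_congr rfl fun l _ => ?_
            rw [hdot_supp (D l) y hysupp]
          have hray : 2*Dmax*(m:ℝ) * (y ⬝ᵥ y) ≤ y ⬝ᵥ N *ᵥ y := by
            rcases Nat.eq_zero_or_pos m with hm0 | hmpos
            · subst hm0
              simp only [Nat.cast_zero, mul_zero, zero_mul]
              exact psd_quad_nonneg hNpsd y
            · have hmR : (0:ℝ) < (m:ℝ) := by exact_mod_cast hmpos
              rw [hquadN] at hyge
              have h5 : 2 * Dmax * (∑ j, y j ^ 2) * (m:ℝ) ≤ (y ⬝ᵥ N *ᵥ y) := by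
                have h6 := mul_le_mul_of_nonneg_right hyge (le_of_lt hmR)
                calc 2 * Dmax * (∑ j, y j ^ 2) * (m:ℝ)
                    ≤ 1/(m:ℝ) * (y ⬝ᵥ N *ᵥ y) * (m:ℝ) := h6
                _ = y ⬝ᵥ N *ᵥ y := by field_simp
              rw [hyy]
              calc 2*Dmax*(m:ℝ) * (∑ j, y j ^ 2)
                  = 2 * Dmax * (∑ j, y j ^ 2) * (m:ℝ) := by ring
              _ ≤ y ⬝ᵥ N *ᵥ y := h5
          have hG := G_lower hNpsd hθnn hsR1
            (by positivity : (0:ℝ) ≤ 2*Dmax*(m:ℝ)) ⟨y, hyy0, hray⟩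
          have hGe : (1:ℝ) ≤ Real.exp (-(θ * (2*Dmax*(m:ℝ)))) * Gexp θ ((S.card : ℝ)) N := by
            have h7 := mul_le_mul_of_nonneg_left hG
              (le_of_lt (Real.exp_pos (-(θ * (2*Dmax*(m:ℝ))))))
            calc (1:ℝ) = Real.exp (-(θ * (2*Dmax*(m:ℝ)))) * Real.exp (θ * (2*Dmax*(m:ℝ))) := by
                  rw [← Real.exp_add]
                  norm_num
            _ ≤ Real.exp (-(θ * (2*Dmax*(m:ℝ)))) * Gexp θ ((S.card : ℝ)) N := h7
          calc (∏ l, p (D l)) = (∏ l, p (D l)) * 1 := by rw [mul_one]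
          _ ≤ (∏ l, p (D l)) * (Real.exp (-(θ * (2*Dmax*(m:ℝ)))) * Gexp θ ((S.card : ℝ)) N) :=
              mul_le_mul_of_nonneg_left hGe (hptD D)
          _ = Real.exp (-(θ * (2*Dmax*(m:ℝ)))) * ((∏ l, p (D l)) * Gexp θ ((S.card : ℝ)) N) := by
              ring
        · rw [Set.indicator_of_notMem hD]
          exact mul_nonneg (le_of_lt (Real.exp_pos _)) (mul_nonneg (hptD D) hGnn)
      calc iidProb p m Eᶜ
          = ∑ D : Fin m → (Fin n → Bool), Eᶜ.indicator (fun D => ∏ l, p (D l)) D := rfl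
      _ ≤ ∑ D : Fin m → (Fin n → Bool), Real.exp (-(θ * (2*Dmax*(m:ℝ)))) * ((∏ l, p (D l)) *
            Gexp θ ((S.card : ℝ)) (∑ l, vecMulVec (ζm (D l)) (ζm (D l)))) :=
          Finset.sum_le_sum fun D _ => hperD D
      _ = Real.exp (-(θ * (2*Dmax*(m:ℝ)))) * ∑ D : Fin m → (Fin n → Bool), ((∏ l, p (D l)) *
            Gexp θ ((S.card : ℝ)) (∑ l, vecMulVec (ζm (D l)) (ζm (D l)))) := by
          rw [Finset.mul_sum]
      _ ≤ Real.exp (-(θ * (2*Dmax*(m:ℝ))))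
            * ((S.card : ℝ) * (1 + gammaS θ (S.card : ℝ) * Dmax)^m) :=
          mul_le_mul_of_nonneg_left hEG (le_of_lt (Real.exp_pos _))
    have hfinal : Real.exp (-(θ * (2*Dmax*(m:ℝ))))
          * ((S.card : ℝ) * (1 + gammaS θ (S.card : ℝ) * Dmax)^m)
        ≤ (S.card : ℝ) * Real.exp (-((m:ℝ) * (1 - mixCoef n q NE.card)) /
            (4 * (S.card : ℝ))) := by
      rw [hγval]
      have hpowle : (1 + 1/(S.card : ℝ) * Dmax)^m ≤ Real.exp ((m:ℝ) * (Dmax/(S.card : ℝ))) := by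
        have h1 : 1 + 1/(S.card : ℝ) * Dmax ≤ Real.exp (Dmax/(S.card : ℝ)) := by
          have h2 := Real.add_one_le_exp (Dmax/(S.card : ℝ))
          have h3 : 1/(S.card : ℝ) * Dmax = Dmax/(S.card : ℝ) := by ring
          linarith
        have hbase : (0:ℝ) ≤ 1 + 1/(S.card : ℝ) * Dmax := by
          have h4 : (0:ℝ) ≤ 1/(S.card : ℝ) * Dmax := by positivity
          linarith
        calc (1 + 1/(S.card : ℝ) * Dmax)^m ≤ (Real.exp (Dmax/(S.card : ℝ)))^m :=
              pow_le_pow_left₀ hbase h1 m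
        _ = Real.exp ((m:ℝ) * (Dmax/(S.card : ℝ))) := by rw [← Real.exp_nat_mul]
      have hexpcomp : (m:ℝ) * (Dmax/(S.card : ℝ)) + (-(θ * (2*Dmax*(m:ℝ))))
          ≤ -((m:ℝ) * (1 - mixCoef n q NE.card)) / (4 * (S.card : ℝ)) := by
        have hkey : ((m:ℝ) * (1 - mixCoef n q NE.card)) / (4 * (S.card : ℝ))
            ≤ (2*Real.log 2 - 1) * Dmax * (m:ℝ) / (S.card : ℝ) := by
          rw [div_le_div_iff₀ (by positivity) hsRpos]
          have hmnn : (0:ℝ) ≤ (m:ℝ) := Nat.cast_nonneg m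
          have hfac1 : (1:ℝ) - mixCoef n q NE.card ≤ 1 := by linarith
          have hfac2 : (1:ℝ) ≤ 4 * ((2*Real.log 2 - 1) * Dmax) := by nlinarith
          have hmS : (0:ℝ) ≤ (m:ℝ) * (S.card : ℝ) := mul_nonneg hmnn (le_of_lt hsRpos)
          nlinarith [mul_le_mul_of_nonneg_right hfac2 hmS]
        have hLHSeq : (m:ℝ) * (Dmax/(S.card : ℝ)) + (-(θ * (2*Dmax*(m:ℝ))))
            = -((2*Real.log 2 - 1) * Dmax * (m:ℝ) / (S.card : ℝ)) := by
          rw [hθdef]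
          field_simp
          ring
        rw [hLHSeq, neg_div]
        linarith
      calc Real.exp (-(θ * (2*Dmax*(m:ℝ)))) * ((S.card : ℝ) * (1 + 1/(S.card : ℝ) * Dmax)^m)
          ≤ Real.exp (-(θ * (2*Dmax*(m:ℝ))))
            * ((S.card : ℝ) * Real.exp ((m:ℝ) * (Dmax/(S.card : ℝ)))) := by
            refine mul_le_mul_of_nonneg_left ?_ (le_of_lt (Real.exp_pos _))
            exact mul_le_mul_of_nonneg_left hpowle (le_of_lt hsRpos)
      _ = (S.card : ℝ) * Real.exp ((m:ℝ) * (Dmax/(S.card : ℝ)) + (-(θ * (2*Dmax*(m:ℝ))))) := by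
            rw [Real.exp_add]
            ring
      _ ≤ (S.card : ℝ) * Real.exp (-((m:ℝ) * (1 - mixCoef n q NE.card)) /
            (4 * (S.card : ℝ))) := by
            refine mul_le_mul_of_nonneg_left ?_ (le_of_lt hsRpos)
            exact Real.exp_le_exp.mpr hexpcomp
    rw [hsplitEC]
    have hfin2 : iidProb p m Eᶜ ≤ (S.card : ℝ) * Real.exp (-((m:ℝ) * (1 - mixCoef n q NE.card)) /
        (4 * (S.card : ℝ))) := le_trans hmark hfinal
    linarith
end
end

section
/- Fix data z^(1),…,z^(m) ∈ {−1,+1}^n, a vector v*_S ∈ ℝ^{|S|} (restriction of v* to its support S), and Δ_S ∈ ℝ^{|S|} with ‖Δ_S‖₂ = b. Suppose (i) λ_min((1/m)·Σ_l η(v*_Sᵀ z^(l)_S) z^(l)_S (z^(l)_S)ᵀ) ≥ C_min/2, (ii) λ_max((1/m)·Σ_l z^(l)_S (z^(l)_S)ᵀ) ≤ 2·D_max, and (iii) b·√|S|·D_max/5 ≤ C_min/4. Then for every θ ∈ [0,1], λ_min((1/m)·Σ_l η((v*_S + θΔ_S)ᵀ z^(l)_S) z^(l)_S (z^(l)_S)ᵀ)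 ≥ C_min/4. -/
/- Common setup: linear influence games (LIGs), the PSNE set, the noisy
observation model, feature vectors, the logistic loss and its gradient,
population/sample Hessian and scatter matrices, and Rayleigh-quotient
encodings of eigenvalue bounds for (symmetric) submatrices.

Joint actions in `{-1,+1}^n` are modeled as `Fin n → Bool` via the sign map
`sgn` (`true ↦ +1`, `false ↦ -1`).  For player `i`, the feature vector
`z_i(x) = (x_i · x_{-i}, x_i)` and the parameter vector `v_i = (w_{i,-i}, -b_i)`
are indexed by `Fin n`, with the bias coordinate placed at index `i`
(a fixed permutation of the paper's coordinate ordering), so that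
`v_i ⬝ᵥ z_i(x) = x_i (∑_{j ≠ i} W i j · x_j - b i)` is player `i`'s payoff. -/

open Matrix Finset

noncomputable section

lemma quadForm_eq {m n : ℕ} (c : ℝ) (w : Fin m → ℝ) (z : Fin m → Fin n → ℝ) (y : Fin n → ℝ) :
    quadForm (c • ∑ l, w l • vecMulVec (z l) (z l)) y = c * ∑ l, w l * (z l ⬝ᵥ y) ^ 2 := by
  have hmv : (c • ∑ l, w l • vecMulVec (z l) (z l)).mulVec y
      = fun j => ∑ l, c * (w l * (z l j * (z l ⬝ᵥ y))) := by
    funext j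
    simp only [Matrix.mulVec, dotProduct, Matrix.smul_apply, Matrix.sum_apply,
      Matrix.vecMulVec_apply, smul_eq_mul]
    calc ∑ k, (c * ∑ l, w l * (z l j * z l k)) * y k
        = ∑ k, ∑ l, c * (w l * (z l j * (z l k * y k))) := by
          refine Finset.sum_congr rfl fun k _ => ?_
          rw [Finset.mul_sum, Finset.sum_mul]
          exact Finset.sum_congr rfl fun l _ => by ring
      _ = ∑ l, ∑ k, c * (w l * (z l j * (z l k * y k))) := Finset.sum_comm
      _ = ∑ l, c * (w l * (z l j * ∑ k, z l k * y k)) := by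
          refine Finset.sum_congr rfl fun l _ => ?_
          rw [Finset.mul_sum, Finset.mul_sum, Finset.mul_sum]
  rw [quadForm, hmv]
  simp only [dotProduct]
  calc ∑ j, y j * ∑ l, c * (w l * (z l j * (z l ⬝ᵥ y)))
      = ∑ j, ∑ l, c * (w l * ((z l j * y j) * (z l ⬝ᵥ y))) := by
        refine Finset.sum_congr rfl fun j _ => ?_
        rw [Finset.mul_sum]
        exact Finset.sum_congr rfl fun l _ => by ring
    _ = ∑ l, ∑ j, c * (w l * ((z l j * y j) * (z l ⬝ᵥ y))) := Finset.sum_comm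
    _ = c * ∑ l, w l * (z l ⬝ᵥ y) ^ 2 := by
        rw [Finset.mul_sum]
        refine Finset.sum_congr rfl fun l _ => ?_
        have hd : z l ⬝ᵥ y = ∑ j, z l j * y j := rfl
        calc ∑ j, c * (w l * ((z l j * y j) * (z l ⬝ᵥ y)))
            = (∑ j, z l j * y j) * (c * (w l * (z l ⬝ᵥ y))) := by
              rw [Finset.sum_mul]
              exact Finset.sum_congr rfl fun j _ => by ring
          _ = c * (w l * (z l ⬝ᵥ y) ^ 2) := by rw [← hd]; ring

lemma eta_hasDerivAt (s : ℝ) : HasDerivAt eta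
    (-((Real.exp (s/2) - Real.exp (-s/2)) / (Real.exp (s/2) + Real.exp (-s/2)) ^ 3)) s := by
  have hA : 0 < Real.exp (s/2) := Real.exp_pos _
  have hB : 0 < Real.exp (-s/2) := Real.exp_pos _
  have hg : 0 < Real.exp (s/2) + Real.exp (-s/2) := by positivity
  have h1 : HasDerivAt (fun x : ℝ => Real.exp (x/2)) (Real.exp (s/2) * (1/2)) s :=
    ((hasDerivAt_id s).div_const 2).exp
  have h2 : HasDerivAt (fun x : ℝ => Real.exp (-x/2)) (Real.exp (-s/2) * (-1/2)) s := by
    have := (((hasDerivAt_id s).neg).div_const 2).exp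
    simpa using this
  have hsum := h1.add h2
  have hpow := hsum.pow 2
  have hne : (Real.exp (s/2) + Real.exp (-s/2)) ^ 2 ≠ 0 := by positivity
  have hinv := hpow.inv hne
  have heq : eta = fun x : ℝ => ((Real.exp (x/2) + Real.exp (-x/2)) ^ 2)⁻¹ := by
    funext t; rw [eta, one_div]
  rw [heq]
  refine hinv.congr_deriv ?_
  simp only [Pi.add_apply, Pi.pow_apply]
  field_simp
  ring

lemma eta_lip (x y : ℝ) : |eta x - eta y| ≤ (1/10) * |x - y| := by
  have bound : ∀ s : ℝ,
      ‖-((Real.exp (s/2) - Real.exp (-s/2)) / (Real.exp (s/2) + Real.exp (-s/2)) ^ 3)‖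
        ≤ (1/10 : ℝ) := by
    intro s
    set A := Real.exp (s/2) with hAdef
    set B := Real.exp (-s/2) with hBdef
    have hA : 0 < A := Real.exp_pos _
    have hB : 0 < B := Real.exp_pos _
    have hAB : A * B = 1 := by
      rw [hAdef, hBdef, ← Real.exp_add, show s/2 + -s/2 = 0 by ring, Real.exp_zero]
    set g := A + B with hgdef
    have hg2 : 2 ≤ g := by nlinarith [sq_nonneg (A - B)]
    have hg0 : 0 < g := by linarith
    set D := |A - B| with hDdef
    have hD0 : 0 ≤ D := abs_nonneg _
    have hDsq : D ^ 2 = g ^ 2 - 4 := by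
      rw [hDdef, sq_abs]; nlinarith
    clear_value A B g D
    have key : 10 * D ≤ g ^ 3 := by
      have hsq : (10 * D) ^ 2 ≤ (g ^ 3) ^ 2 := by
        nlinarith [mul_nonneg (by nlinarith : (0:ℝ) ≤ g^2 - 4) (sq_nonneg (g^2 - 6)),
          sq_nonneg (4*(g^2) - 23), sq_nonneg g, hg2]
      have h10 : 0 ≤ 10 * D := by linarith
      have h3 : 0 ≤ g ^ 3 := by positivity
      nlinarith [hsq]
    rw [Real.norm_eq_abs, abs_neg, abs_div, abs_of_pos (by positivity : (0:ℝ) < g ^ 3)]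
    rw [div_le_iff₀ (by positivity : (0:ℝ) < g ^ 3)]
    calc |A - B| = D := hDdef.symm
      _ ≤ g^3 / 10 := by nlinarith [key]
      _ = 1/10 * g^3 := by ring
  have := Convex.norm_image_sub_le_of_norm_hasDerivWithin_le
    (f := eta)
    (f' := fun s => -((Real.exp (s/2) - Real.exp (-s/2)) / (Real.exp (s/2) + Real.exp (-s/2)) ^ 3))
    (s := Set.univ)
    (fun s _ => (eta_hasDerivAt s).hasDerivWithinAt)
    (fun s _ => bound s) convex_univ (Set.mem_univ y) (Set.mem_univ x)
  simpa [Real.norm_eq_abs] using this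

lemma supp_dot_abs_le {n : ℕ} (S : Finset (Fin n)) (Δ z : Fin n → ℝ)
    (hΔ : ∀ j ∉ S, Δ j = 0) (hz : ∀ j, z j = 1 ∨ z j = -1) (bb : ℝ)
    (hb : Real.sqrt (∑ j, Δ j ^ 2) = bb) :
    |Δ ⬝ᵥ z| ≤ bb * Real.sqrt (S.card : ℝ) := by
  have h1 : Δ ⬝ᵥ z = ∑ j ∈ S, Δ j * z j := by
    rw [dotProduct]
    exact (Finset.sum_subset S.subset_univ (fun j _ hj => by rw [hΔ j hj, zero_mul])).symm
  have h2 : |Δ ⬝ᵥ z| ≤ ∑ j ∈ S, |Δ j| := by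
    rw [h1]
    refine (Finset.abs_sum_le_sum_abs _ _).trans (Finset.sum_le_sum fun j _ => ?_)
    rcases hz j with h | h <;> simp [abs_mul, h]
  have hsum : ∑ j ∈ S, Δ j ^ 2 = ∑ j, Δ j ^ 2 :=
    Finset.sum_subset S.subset_univ (fun j _ hj => by rw [hΔ j hj]; ring)
  have h3 : (∑ j ∈ S, |Δ j|) ^ 2 ≤ (S.card : ℝ) * ∑ j, Δ j ^ 2 := by
    have := sq_sum_le_card_mul_sum_sq (s := S) (f := fun j => |Δ j|)
    simpa [sq_abs, hsum] using this
  have h4 : ∑ j ∈ S, |Δ j| ≤ Real.sqrt ((S.card : ℝ) * ∑ j, Δ j ^ 2) :=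
    Real.le_sqrt_of_sq_le h3
  have h5 : Real.sqrt ((S.card : ℝ) * ∑ j, Δ j ^ 2)
      = bb * Real.sqrt (S.card : ℝ) := by
    rw [Real.sqrt_mul (by positivity), hb, mul_comm]
  exact h2.trans (h4.trans_eq h5)

/-- fixed-design control of the minimum eigenvalue of the sample
Hessian along the segment from `v*_S` to `v*_S + Δ_S`.  Vectors `v` and `Δ`
supported on `S` play the roles of `v*_S` and `Δ_S` (so that, e.g.,
`v ⬝ᵥ z⁽ˡ⁾ = v*_Sᵀ z⁽ˡ⁾_S`, and the Rayleigh quotients over vectors supported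
on `S` are those of the corresponding `S × S` matrices). -/
theorem hessian_min_eig_along_segment
    (n m : ℕ) (S : Finset (Fin n)) (zl : Fin m → (Fin n → ℝ))
    (hz : ∀ l j, zl l j = 1 ∨ zl l j = -1)
    (v Δ : Fin n → ℝ)
    (hv : ∀ j ∉ S, v j = 0) (hΔ : ∀ j ∉ S, Δ j = 0)
    (bb Cmin Dmax : ℝ) (hC : 0 < Cmin) (hD : 0 < Dmax)
    (hb : Real.sqrt (∑ j, Δ j ^ 2) = bb)
    (h1 : minEigSubGE
      ((1 / (m : ℝ)) • ∑ l, eta (v ⬝ᵥ zl l) • vecMulVec (zl l) (zl l))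
      S (Cmin / 2))
    (h2 : maxEigSubLE ((1 / (m : ℝ)) • ∑ l, vecMulVec (zl l) (zl l))
      S (2 * Dmax))
    (h3 : bb * Real.sqrt (S.card : ℝ) * Dmax / 5 ≤ Cmin / 4) :
    ∀ θ : ℝ, θ ∈ Set.Icc (0 : ℝ) 1 →
      minEigSubGE
        ((1 / (m : ℝ)) •
          ∑ l, eta ((fun j => v j + θ * Δ j) ⬝ᵥ zl l) • vecMulVec (zl l) (zl l))
        S (Cmin / 4) := by
  intro θ hθ y hy
  obtain ⟨hθ0, hθ1⟩ := hθ
  have hny : (0:ℝ) ≤ ∑ j, y j ^ 2 := Finset.sum_nonneg fun j _ => sq_nonneg _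
  have hb0 : 0 ≤ bb := hb ▸ Real.sqrt_nonneg _
  have hS0 : 0 ≤ Real.sqrt (S.card : ℝ) := Real.sqrt_nonneg _
  have hc0 : (0:ℝ) ≤ 1 / (m:ℝ) := by positivity
  set ε : ℝ := bb * Real.sqrt (S.card : ℝ) / 10 with hεdef
  have hε0 : 0 ≤ ε := by positivity
  -- per-sample eta lower bound
  have heta : ∀ l, eta (v ⬝ᵥ zl l) - ε ≤ eta ((fun j => v j + θ * Δ j) ⬝ᵥ zl l) := by
    intro l
    have hdp : (fun j => v j + θ * Δ j) ⬝ᵥ zl l = v ⬝ᵥ zl l + θ * (Δ ⬝ᵥ zl l) := by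
      simp only [dotProduct, add_mul, Finset.sum_add_distrib, Finset.mul_sum, mul_assoc]
    have hlip := eta_lip ((fun j => v j + θ * Δ j) ⬝ᵥ zl l) (v ⬝ᵥ zl l)
    have hdiff : |(fun j => v j + θ * Δ j) ⬝ᵥ zl l - v ⬝ᵥ zl l| ≤ bb * Real.sqrt (S.card : ℝ) := by
      rw [hdp, add_sub_cancel_left, abs_mul]
      calc |θ| * |Δ ⬝ᵥ zl l| ≤ 1 * (bb * Real.sqrt (S.card : ℝ)) := by
            refine mul_le_mul ?_ (supp_dot_abs_le S Δ (zl l) hΔ (hz l) bb hb)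
              (abs_nonneg _) zero_le_one
            rw [abs_of_nonneg hθ0]; exact hθ1
        _ = bb * Real.sqrt (S.card : ℝ) := one_mul _
    have h10 : |eta ((fun j => v j + θ * Δ j) ⬝ᵥ zl l) - eta (v ⬝ᵥ zl l)| ≤ ε := by
      rw [hεdef]
      calc |eta ((fun j => v j + θ * Δ j) ⬝ᵥ zl l) - eta (v ⬝ᵥ zl l)|
          ≤ (1/10) * |(fun j => v j + θ * Δ j) ⬝ᵥ zl l - v ⬝ᵥ zl l| := hlip
        _ ≤ (1/10) * (bb * Real.sqrt (S.card : ℝ)) := by linarith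
        _ = bb * Real.sqrt (S.card : ℝ) / 10 := by ring
    have := neg_abs_le (eta ((fun j => v j + θ * Δ j) ⬝ᵥ zl l) - eta (v ⬝ᵥ zl l))
    linarith
  -- rewrite the quadratic forms
  have hq1 := h1 y hy
  rw [quadForm_eq] at hq1
  have hq2 := h2 y hy
  have hscat : ((1 / (m : ℝ)) • ∑ l, vecMulVec (zl l) (zl l))
      = (1 / (m : ℝ)) • ∑ l, (1:ℝ) • vecMulVec (zl l) (zl l) := by simp
  rw [hscat, quadForm_eq] at hq2
  simp only [one_mul] at hq2
  rw [quadForm_eq]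
  -- the chain of inequalities
  have step1 : (1/(m:ℝ)) * ∑ l, (eta (v ⬝ᵥ zl l) - ε) * (zl l ⬝ᵥ y) ^ 2
      ≤ (1/(m:ℝ)) * ∑ l, eta ((fun j => v j + θ * Δ j) ⬝ᵥ zl l) * (zl l ⬝ᵥ y) ^ 2 :=
    mul_le_mul_of_nonneg_left
      (Finset.sum_le_sum fun l _ => mul_le_mul_of_nonneg_right (heta l) (sq_nonneg _)) hc0
  have expand : (1/(m:ℝ)) * ∑ l, (eta (v ⬝ᵥ zl l) - ε) * (zl l ⬝ᵥ y) ^ 2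
      = (1/(m:ℝ)) * ∑ l, eta (v ⬝ᵥ zl l) * (zl l ⬝ᵥ y) ^ 2
        - ε * ((1/(m:ℝ)) * ∑ l, (zl l ⬝ᵥ y) ^ 2) := by
    rw [show ∑ l, (eta (v ⬝ᵥ zl l) - ε) * (zl l ⬝ᵥ y) ^ 2
        = ∑ l, (eta (v ⬝ᵥ zl l) * (zl l ⬝ᵥ y) ^ 2 - ε * (zl l ⬝ᵥ y) ^ 2) from
      Finset.sum_congr rfl fun l _ => by ring]
    rw [Finset.sum_sub_distrib, ← Finset.mul_sum]
    ring
  have hεQ : ε * ((1/(m:ℝ)) * ∑ l, (zl l ⬝ᵥ y) ^ 2)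
      ≤ ε * (2 * Dmax * ∑ j, y j ^ 2) := mul_le_mul_of_nonneg_left hq2 hε0
  have hε2D : ε * (2 * Dmax) * ∑ j, y j ^ 2 ≤ Cmin / 4 * ∑ j, y j ^ 2 := by
    refine mul_le_mul_of_nonneg_right ?_ hny
    calc ε * (2 * Dmax) = bb * Real.sqrt (S.card : ℝ) * Dmax / 5 := by rw [hεdef]; ring
      _ ≤ Cmin / 4 := h3
  nlinarith [step1, expand, hεQ, hε2D, hq1, hny]
end
end
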